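/- arXiv:2602.05076 — 7 statements merged into one kernel-verified Lean document; each statement's English description precedes it below -/
import Mathlib

section
/- Let I be an ideal minimally generated by square-free monomials m_1,…,m_q in R = k[x_1,…,x_n] and let ψ_I : S_[q] → R be the associated ring homomorphism. For any two monomials μ, ν in S_[q], ψ_I(lcm(μ, ν)) = lcm(ψ_I(μ), ψ_I(ν)). -/
open MvPolynomial

/-- Index type: nonempty subsets of `[q]`. -/
abbrev EIdx (q : ℕ) := {A : Finset (Fin q) // A.Nonempty}

/-- `θ_I(A)`, where the square-free monomial `m_j` is recorded by its support `S j`. -/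
def thetaSet {n q : ℕ} (S : Fin q → Finset (Fin n)) (A : Finset (Fin q)) :
    Finset (Fin n) :=
  A.inf S \ Aᶜ.sup S

/-- The ring homomorphism `ψ_I : S_[q] → R`, `y_A ↦ ∏_{x ∈ θ_I(A)} x`. -/
noncomputable def psiI (k : Type*) [Field k] {n q : ℕ}
    (S : Fin q → Finset (Fin n)) :
    MvPolynomial (EIdx q) k →+* MvPolynomial (Fin n) k :=
  (aeval fun A : EIdx q => ∏ x ∈ thetaSet S A.1, X x).toRingHom

section Aux

variable {σ ι R : Type*} [CommSemiring R]

lemma monomial_finset_prod (t : Finset ι) (f : ι → σ →₀ ℕ) :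
    ∏ i ∈ t, monomial (f i) (1 : R) = monomial (∑ i ∈ t, f i) 1 := by
  classical
  induction t using Finset.cons_induction with
  | empty => simp
  | cons a t ha ih =>
      rw [Finset.prod_cons, Finset.sum_cons, ih, monomial_mul, one_mul]

lemma prod_X_eq_monomial (t : Finset σ) :
    ∏ x ∈ t, (X x : MvPolynomial σ R) =
      monomial (∑ x ∈ t, Finsupp.single x 1) 1 := by
  rw [← monomial_finset_prod]
  rfl

lemma monomial_one_dvd_iff_coeff {a : σ →₀ ℕ} {w : MvPolynomial σ R} :
    monomial a (1 : R) ∣ w ↔ ∀ s, ¬a ≤ s → coeff s w = 0 := by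
  rw [monomial_one_dvd_iff_modMonomial_eq_zero]
  constructor
  · intro h s hs
    rw [← coeff_modMonomial_of_not_le w hs, h, coeff_zero]
  · intro h
    ext s
    by_cases hs : a ≤ s
    · rw [coeff_modMonomial_of_le w hs, coeff_zero]
    · rw [coeff_modMonomial_of_not_le w hs, h s hs, coeff_zero]

/-- The θ sets are pairwise disjoint. -/
lemma thetaSet_disjoint {n q : ℕ} (S : Fin q → Finset (Fin n))
    {A B : Finset (Fin q)} (hAB : A ≠ B) {x : Fin n}
    (hA : x ∈ thetaSet S A) (hB : x ∈ thetaSet S B) : False := by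
  classical
  simp only [thetaSet, Finset.mem_sdiff] at hA hB
  have key : ∀ j : Fin q, j ∈ A → j ∈ B := by
    intro j hj
    by_contra hjB
    exact hB.2 ((Finset.le_sup (Finset.mem_compl.2 hjB) : S j ≤ Bᶜ.sup S)
      ((Finset.inf_le hj : A.inf S ≤ S j) hA.1))
  have key' : ∀ j : Fin q, j ∈ B → j ∈ A := by
    intro j hj
    by_contra hjA
    exact hA.2 ((Finset.le_sup (Finset.mem_compl.2 hjA) : S j ≤ Aᶜ.sup S)
      ((Finset.inf_le hj : B.inf S ≤ S j) hB.1))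
  exact hAB (Finset.Subset.antisymm key key')

end Aux

theorem stmt3 (k : Type*) [Field k] (n q : ℕ)
    (S : Fin q → Finset (Fin n))
    (m : Fin q → MvPolynomial (Fin n) k)
    (hm : ∀ j, m j = ∏ x ∈ S j, X x)
    (I : Ideal (MvPolynomial (Fin n) k))
    (hI : I = Ideal.span (Set.range m))
    (hmin : ∀ i j : Fin q, i ≠ j → ¬ m i ∣ m j)
    (b c : EIdx q → ℕ) :
    -- `ψ_I (lcm (y^b, y^c))` is a least common multiple of `ψ_I (y^b)` and `ψ_I (y^c)`
    psiI k S (∏ A : EIdx q, X A ^ b A) ∣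
        psiI k S (∏ A : EIdx q, X A ^ max (b A) (c A)) ∧
    psiI k S (∏ A : EIdx q, X A ^ c A) ∣
        psiI k S (∏ A : EIdx q, X A ^ max (b A) (c A)) ∧
    ∀ w : MvPolynomial (Fin n) k,
      psiI k S (∏ A : EIdx q, X A ^ b A) ∣ w →
      psiI k S (∏ A : EIdx q, X A ^ c A) ∣ w →
      psiI k S (∏ A : EIdx q, X A ^ max (b A) (c A)) ∣ w := by
  classical
  -- the exponent finsupp of `ψ_I (y^e)`
  set t : EIdx q → (Fin n →₀ ℕ) :=
    fun A => ∑ x ∈ thetaSet S A.1, Finsupp.single x 1 with ht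
  set D : (EIdx q → ℕ) → (Fin n →₀ ℕ) :=
    fun e => ∑ A : EIdx q, e A • t A with hD
  have hpsi : ∀ e : EIdx q → ℕ,
      psiI k S (∏ A : EIdx q, X A ^ e A) = monomial (D e) 1 := by
    intro e
    rw [map_prod]
    have : ∀ A : EIdx q, psiI k S (X A ^ e A) = monomial (e A • t A) 1 := by
      intro A
      rw [map_pow]
      have : psiI k S (X A) = monomial (t A) 1 := by
        simp only [psiI, AlgHom.toRingHom_eq_coe, RingHom.coe_coe, aeval_X]
        exact prod_X_eq_monomial _
      rw [this, monomial_pow, one_pow]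
    simp_rw [this]
    rw [monomial_finset_prod]
  -- value of `D e` at a point
  have htval : ∀ (A : EIdx q) (x : Fin n),
      t A x = if x ∈ thetaSet S A.1 then 1 else 0 := by
    intro A x
    rw [ht]
    rw [Finset.sum_apply']
    simp_rw [Finsupp.single_apply]
    exact Finset.sum_ite_eq' _ _ _
  have hDval : ∀ (e : EIdx q → ℕ) (x : Fin n),
      D e x = ∑ A : EIdx q, e A * (if x ∈ thetaSet S A.1 then 1 else 0) := by
    intro e x
    rw [hD]
    rw [Finset.sum_apply']
    simp_rw [Finsupp.smul_apply, htval, smul_eq_mul]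
  -- key pointwise identity using disjointness
  have hmax : ∀ x : Fin n,
      D (fun A => max (b A) (c A)) x = max (D b x) (D c x) := by
    intro x
    simp_rw [hDval]
    by_cases hx : ∃ A : EIdx q, x ∈ thetaSet S A.1
    · obtain ⟨A0, hA0⟩ := hx
      have hsum : ∀ e : EIdx q → ℕ,
          (∑ A : EIdx q, e A * (if x ∈ thetaSet S A.1 then 1 else 0)) = e A0 := by
        intro e
        rw [Finset.sum_eq_single A0]
        · simp [hA0]
        · intro B _ hB
          have : x ∉ thetaSet S B.1 := fun hxB =>
            thetaSet_disjoint S (fun h : B.1 = A0.1 => hB (Subtype.ext h)) hxB hA0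
          simp [this]
        · intro h; exact absurd (Finset.mem_univ A0) h
      rw [hsum, hsum, hsum]
    · push_neg at hx
      have hz : ∀ e : EIdx q → ℕ,
          (∑ A : EIdx q, e A * (if x ∈ thetaSet S A.1 then 1 else 0)) = 0 := by
        intro e
        refine Finset.sum_eq_zero fun A _ => by simp [hx A]
      rw [hz, hz, hz]; rfl
  have hble : D b ≤ D (fun A => max (b A) (c A)) := by
    intro x; rw [hmax]; exact le_max_left _ _
  have hcle : D c ≤ D (fun A => max (b A) (c A)) := by
    intro x; rw [hmax]; exact le_max_right _ _
  refine ⟨?_, ?_, ?_⟩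
  · rw [hpsi, hpsi]; exact monomial_one_dvd_monomial_one.2 hble
  · rw [hpsi, hpsi]; exact monomial_one_dvd_monomial_one.2 hcle
  · intro w hb hc
    rw [hpsi] at hb hc ⊢
    rw [monomial_one_dvd_iff_coeff] at hb hc ⊢
    intro s hs
    have : ¬ D b ≤ s ∨ ¬ D c ≤ s := by
      by_contra h
      push_neg at h
      exact hs fun x => by rw [hmax]; exact max_le (h.1 x) (h.2 x)
    rcases this with h | h
    · exact hb s h
    · exact hc s h
end

section
/- Let I be an ideal minimally generated by square-free monomials m_1,…,m_q in R and ψ_I : S_[q] → R the associated ring homomorphism. If J and K are monomial ideals in S_[q], then the ideal of R generated by ψ_I(J ∩ K) equals the intersection of the ideal generated by ψ_I(J) with the ideal generated by ψ_I(K). -/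
open MvPolynomial

/-- A monomial ideal: an ideal generated by a set of monomials. -/
def IsMonomialIdeal {k : Type*} [Field k] {σ : Type*}
    (J : Ideal (MvPolynomial σ k)) : Prop :=
  ∃ G : Set (σ →₀ ℕ), J = Ideal.span ((fun d => monomial d (1 : k)) '' G)

namespace Stmt4Aux

variable {n q : ℕ}

lemma theta_disjoint (S : Fin q → Finset (Fin n)) {A B : EIdx q} (h : A ≠ B) :
    Disjoint (thetaSet S A.1) (thetaSet S B.1) := by
  have hAB : A.1 ≠ B.1 := fun e => h (Subtype.ext e)
  have key : ∀ C D : EIdx q, ∀ j, j ∈ C.1 → j ∉ D.1 →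
      Disjoint (thetaSet S C.1) (thetaSet S D.1) := by
    intro C D j hjC hjD
    rw [Finset.disjoint_left]
    intro x hxC hxD
    have hx1 : x ∈ S j := by
      have h1 := (Finset.mem_sdiff.1 hxC).1
      have h2 : (C.1).inf S ⊆ S j := Finset.inf_le hjC
      exact h2 h1
    have hx2 : x ∉ S j := by
      have h1 := (Finset.mem_sdiff.1 hxD).2
      have h2 : S j ⊆ (D.1)ᶜ.sup S := Finset.le_sup (Finset.mem_compl.2 hjD)
      exact fun hxj => h1 (h2 hxj)
    exact hx2 hx1
  by_cases hsub : A.1 ⊆ B.1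
  · obtain ⟨j, hjB, hjA⟩ := Finset.not_subset.1 fun hs => hAB (Finset.Subset.antisymm hsub hs)
    exact (key B A j hjB hjA).symm
  · obtain ⟨j, hjA, hjB⟩ := Finset.not_subset.1 hsub
    exact key A B j hjA hjB

noncomputable def tvec (S : Fin q → Finset (Fin n)) (A : EIdx q) : Fin n →₀ ℕ :=
  ∑ x ∈ thetaSet S A.1, Finsupp.single x 1

lemma tvec_apply (S : Fin q → Finset (Fin n)) (A : EIdx q) (x : Fin n) :
    tvec S A x = if x ∈ thetaSet S A.1 then 1 else 0 := by
  rw [tvec, Finsupp.finset_sum_apply]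
  simp [Finsupp.single_apply]

noncomputable def phi (S : Fin q → Finset (Fin n)) (d : EIdx q →₀ ℕ) : Fin n →₀ ℕ :=
  d.sum fun A c => c • tvec S A

lemma phi_apply (S : Fin q → Finset (Fin n)) (d : EIdx q →₀ ℕ) (x : Fin n) :
    phi S d x = ∑ A ∈ d.support, d A * tvec S A x := by
  rw [phi, Finsupp.sum, Finsupp.finset_sum_apply]
  simp

lemma phi_sup (S : Fin q → Finset (Fin n)) (d e : EIdx q →₀ ℕ) :
    phi S (d ⊔ e) = phi S d ⊔ phi S e := by
  ext x
  rw [Finsupp.sup_apply]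
  by_cases h : ∃ A0 : EIdx q, x ∈ thetaSet S A0.1
  · obtain ⟨A0, h0⟩ := h
    have key : ∀ f : EIdx q →₀ ℕ, phi S f x = f A0 := by
      intro f
      rw [phi_apply, Finset.sum_eq_single A0]
      · rw [tvec_apply, if_pos h0, mul_one]
      · intro B _ hBne
        rw [tvec_apply, if_neg, mul_zero]
        exact fun hxB => (Finset.disjoint_left.1 (theta_disjoint S hBne)) hxB h0
      · intro hA0
        rw [Finsupp.notMem_support_iff.1 hA0, zero_mul]
    rw [key, key, key, Finsupp.sup_apply]
  · push_neg at h
    have key : ∀ f : EIdx q →₀ ℕ, phi S f x = 0 := by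
      intro f
      rw [phi_apply]
      exact Finset.sum_eq_zero fun B _ => by rw [tvec_apply, if_neg (h B), mul_zero]
    rw [key, key, key]
    rfl

lemma prod_monomial {k : Type*} [Field k] {ι : Type*} (s : Finset ι)
    (v : ι → (Fin n →₀ ℕ)) :
    (∏ A ∈ s, monomial (v A) (1 : k)) = monomial (∑ A ∈ s, v A) 1 := by
  classical
  induction s using Finset.induction_on with
  | empty => simp [monomial_zero']
  | insert a s h ih => rw [Finset.prod_insert h, Finset.sum_insert h, ih, monomial_mul, one_mul]

lemma prod_X_theta {k : Type*} [Field k] (S : Fin q → Finset (Fin n)) (A : EIdx q) :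
    (∏ x ∈ thetaSet S A.1, (X x : MvPolynomial (Fin n) k)) = monomial (tvec S A) 1 := by
  rw [tvec, ← prod_monomial]
  exact Finset.prod_congr rfl fun x _ => by rw [← X_pow_eq_monomial, pow_one]

lemma psi_monomial {k : Type*} [Field k] (S : Fin q → Finset (Fin n))
    (d : EIdx q →₀ ℕ) :
    psiI k S (monomial d 1) = monomial (phi S d) 1 := by
  show aeval _ (monomial d 1) = _
  rw [aeval_monomial, map_one, one_mul, phi]
  rw [Finsupp.prod, Finsupp.sum]
  rw [← prod_monomial]
  exact Finset.prod_congr rfl fun A _ => by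
    rw [prod_X_theta, monomial_pow, one_pow]

end Stmt4Aux

open Stmt4Aux

theorem stmt4 (k : Type*) [Field k] (n q : ℕ)
    (S : Fin q → Finset (Fin n))
    (m : Fin q → MvPolynomial (Fin n) k)
    (hm : ∀ j, m j = ∏ x ∈ S j, X x)
    (I : Ideal (MvPolynomial (Fin n) k))
    (hI : I = Ideal.span (Set.range m))
    (hmin : ∀ i j : Fin q, i ≠ j → ¬ m i ∣ m j)
    (J K : Ideal (MvPolynomial (EIdx q) k))
    (hJ : IsMonomialIdeal J) (hK : IsMonomialIdeal K) :
    Ideal.map (psiI k S) (J ⊓ K) =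
      Ideal.map (psiI k S) J ⊓ Ideal.map (psiI k S) K := by
  classical
  obtain ⟨G, hG⟩ := hJ
  obtain ⟨H, hH⟩ := hK
  refine le_antisymm (le_inf (Ideal.map_mono inf_le_left) (Ideal.map_mono inf_le_right)) ?_
  -- images of monomial ideals are monomial ideals with exponents `phi`
  have hmap : ∀ T : Set (EIdx q →₀ ℕ),
      Ideal.map (psiI k S) (Ideal.span ((fun d => monomial d (1 : k)) '' T)) =
        Ideal.span ((fun d => monomial d (1 : k)) '' (phi S '' T)) := by
    intro T
    rw [Ideal.map_span, ← Set.image_comp, ← Set.image_comp]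
    congr 1
    exact Set.image_congr fun d _ => psi_monomial S d
  intro f hf
  obtain ⟨hfJ, hfK⟩ := Ideal.mem_inf.1 hf
  rw [hG, hmap, mem_ideal_span_monomial_image] at hfJ
  rw [hH, hmap, mem_ideal_span_monomial_image] at hfK
  -- f lies in the span of the images of the lcm-generators
  have hfL : f ∈ Ideal.span ((fun d => monomial d (1 : k)) ''
      (Set.image2 (fun d e => phi S (d ⊔ e)) G H)) := by
    rw [mem_ideal_span_monomial_image]
    intro xi hxi
    obtain ⟨sj, ⟨d, hd, rfl⟩, hdle⟩ := hfJ xi hxi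
    obtain ⟨sk, ⟨e, he, rfl⟩, hele⟩ := hfK xi hxi
    exact ⟨phi S (d ⊔ e), Set.mem_image2_of_mem hd he, by
      rw [phi_sup]; exact sup_le hdle hele⟩
  refine Ideal.span_le.2 ?_ hfL
  rintro g ⟨c, ⟨d, hd, e, he, rfl⟩, rfl⟩
  show monomial (phi S (d ⊔ e)) (1:k) ∈ _
  rw [← psi_monomial S (d ⊔ e)]
  refine Ideal.mem_map_of_mem _ ?_
  refine Ideal.mem_inf.2 ⟨?_, ?_⟩
  · rw [hG, mem_ideal_span_monomial_image]
    intro xi hxi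
    have : xi = d ⊔ e := by
      rw [support_monomial, if_neg one_ne_zero] at hxi
      simpa using hxi
    exact ⟨d, hd, this ▸ le_sup_left⟩
  · rw [hH, mem_ideal_span_monomial_image]
    intro xi hxi
    have : xi = d ⊔ e := by
      rw [support_monomial, if_neg one_ne_zero] at hxi
      simpa using hxi
    exact ⟨e, he, this ▸ le_sup_right⟩
end

section
/- Let φ_n : k[z_1,…,z_n] → k[z_1,…,z_{n-1}] be the ring map sending z_n to 1 and fixing z_i for i < n. For any monomial ideal J in k[z_1,…,z_n], the ideal generated by φ_n applied to the integral closure of J equals the integral closure of the ideal generated by φ_n(J). That is, φ_n(\overline{J})R' = \overline{φ_n(J)R'} where R' = k[z_1,…,z_{n-1}]. -/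
set_option synthInstance.maxHeartbeats 1000000
set_option maxHeartbeats 1000000

open MvPolynomial

/-- The integral closure of an ideal `J`: elements satisfying an equation
`x^s + a_1 x^{s-1} + ⋯ + a_s = 0` with `a_i ∈ J^i`. -/
def idealIntCl {R : Type*} [CommRing R] (J : Ideal R) : Set R :=
  {x | ∃ s : ℕ, 0 < s ∧ ∃ a : ℕ → R,
    (∀ i ∈ Finset.Icc 1 s, a i ∈ J ^ i) ∧
    x ^ s + ∑ i ∈ Finset.Icc 1 s, a i * x ^ (s - i) = 0}

open Polynomial in
lemma mem_intCl_of_idealIntCl {R : Type*} [CommRing R] {I : Ideal R} {x : R}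
    (hx : x ∈ idealIntCl I) :
    (Polynomial.C x * Polynomial.X) ∈ integralClosure (reesAlgebra I) (Polynomial R) := by
  obtain ⟨s, hs, a, ha, heq⟩ := hx
  have hmem : ∀ i : ℕ, (Polynomial.C (if i ∈ Finset.Icc 1 s then a i else 0)
      * Polynomial.X ^ i) ∈ reesAlgebra I := by
    intro i
    rw [Polynomial.C_mul_X_pow_eq_monomial]
    refine reesAlgebra.monomial_mem.mpr ?_
    split
    · exact ha i ‹_›
    · exact zero_mem _
  set c : ℕ → reesAlgebra I := fun i => ⟨_, hmem i⟩ with hc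
  refine ⟨Polynomial.X ^ s + ∑ i ∈ Finset.Icc 1 s,
      Polynomial.C (c i) * Polynomial.X ^ (s - i), ?_, ?_⟩
  · apply Polynomial.monic_X_pow_add
    refine lt_of_le_of_lt (Polynomial.degree_sum_le _ _) ?_
    rw [Finset.sup_lt_iff (by exact WithBot.bot_lt_coe s)]
    intro i hi
    refine lt_of_le_of_lt (Polynomial.degree_C_mul_X_pow_le _ _) ?_
    exact_mod_cast Nat.sub_lt_of_pos_le (Finset.mem_Icc.mp hi).1 (Finset.mem_Icc.mp hi).2
  · rw [← Polynomial.aeval_def, map_add, map_sum, map_pow, Polynomial.aeval_X]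
    have hterm : ∀ i ∈ Finset.Icc 1 s,
        Polynomial.aeval (Polynomial.C x * Polynomial.X)
          (Polynomial.C (c i) * Polynomial.X ^ (s - i))
        = Polynomial.C (a i * x ^ (s - i)) * Polynomial.X ^ s := by
      intro i hi
      obtain ⟨h1, h2⟩ := Finset.mem_Icc.mp hi
      rw [map_mul, map_pow, Polynomial.aeval_X, Polynomial.aeval_C]
      have hci : (algebraMap (reesAlgebra I) R[X]) (c i) = Polynomial.C (a i) * Polynomial.X ^ i := by
        simp [hc, h1, h2]
      have hip : i + (s - i) = s := Nat.add_sub_cancel' h2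
      rw [hci, mul_pow]
      calc Polynomial.C (a i) * Polynomial.X ^ i * (Polynomial.C x ^ (s-i) * Polynomial.X ^ (s-i))
          = Polynomial.C (a i) * Polynomial.C (x ^ (s-i)) * (Polynomial.X ^ i * Polynomial.X ^ (s-i)) := by
            rw [← Polynomial.C_pow]; ring
        _ = Polynomial.C (a i * x ^ (s - i)) * Polynomial.X ^ s := by
            rw [← Polynomial.C_mul, ← pow_add, hip]
    rw [Finset.sum_congr rfl hterm, mul_pow, ← Polynomial.C_pow, ← Finset.sum_mul,
      ← map_sum, ← add_mul, ← map_add, heq, map_zero, zero_mul]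

open Polynomial in
lemma idealIntCl_of_mem_intCl {R : Type*} [CommRing R] {I : Ideal R} {x : R}
    (hx : (Polynomial.C x * Polynomial.X) ∈ integralClosure (reesAlgebra I) (Polynomial R)) :
    x ∈ idealIntCl I := by
  obtain ⟨p, hp, hev⟩ := hx
  rw [← Polynomial.aeval_def] at hev
  by_cases hs : p.natDegree = 0
  · -- p = 1, so R is trivial
    have hp1 : p = 1 := hp.natDegree_eq_zero.mp hs
    rw [hp1, map_one] at hev
    have h10 : (1 : R) = 0 := by
      have := congrArg (fun q => Polynomial.coeff q 0) hev
      simpa using this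
    refine ⟨1, one_pos, 0, by simp, ?_⟩
    simp [pow_one]
    calc x = x * 1 := (mul_one x).symm
      _ = 0 := by rw [h10, mul_zero]
  · set s := p.natDegree with hsdef
    have hspos : 0 < s := Nat.pos_of_ne_zero hs
    rw [Polynomial.aeval_eq_sum_range] at hev
    -- take coefficient at s
    have hco := congrArg (fun q => Polynomial.coeff q s) hev
    simp only [Polynomial.finset_sum_coeff, Polynomial.coeff_zero] at hco
    have hterm : ∀ i ∈ Finset.range (s + 1),
        Polynomial.coeff (p.coeff i • (Polynomial.C x * Polynomial.X) ^ i) s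
        = ((p.coeff i : R[X]).coeff (s - i)) * x ^ i := by
      intro i hi
      have hile : i ≤ s := Nat.lt_succ_iff.mp (Finset.mem_range.mp hi)
      have halg : ∀ c : reesAlgebra I, (algebraMap (reesAlgebra I) R[X]) c = (c : R[X]) :=
        fun _ => rfl
      rw [Algebra.smul_def, mul_pow, ← Polynomial.C_pow, halg]
      have : (p.coeff i : R[X]) * (Polynomial.C (x ^ i) * Polynomial.X ^ i)
          = ((p.coeff i : R[X]) * Polynomial.C (x ^ i)) * Polynomial.X ^ i := by ring
      rw [this, Polynomial.coeff_mul_X_pow', if_pos hile, Polynomial.coeff_mul_C]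
    rw [Finset.sum_congr rfl hterm, Finset.sum_range_succ] at hco
    -- leading term
    have hlead : ((p.coeff s : R[X]).coeff (s - s)) * x ^ s = x ^ s := by
      have : p.coeff s = 1 := hp.coeff_natDegree
      rw [this, Nat.sub_self]
      simp
    rw [hlead] at hco
    refine ⟨s, hspos, fun j => ((p.coeff (s - j) : R[X]).coeff j), ?_, ?_⟩
    · intro j hj
      exact (mem_reesAlgebra_iff I _).mp (p.coeff (s - j)).2 j
    · have hre : ∑ i ∈ Finset.range s, ((p.coeff i : R[X]).coeff (s - i)) * x ^ i
          = ∑ j ∈ Finset.Icc 1 s, ((p.coeff (s - j) : R[X]).coeff j) * x ^ (s - j) := by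
        refine Finset.sum_nbij' (fun i => s - i) (fun j => s - j) ?_ ?_ ?_ ?_ ?_
        · intro i hi
          have := Finset.mem_range.mp hi
          exact Finset.mem_Icc.mpr ⟨by omega, by omega⟩
        · intro j hj
          have := Finset.mem_Icc.mp hj
          exact Finset.mem_range.mpr (by omega)
        · intro i hi
          have := Finset.mem_range.mp hi
          omega
        · intro j hj
          have := Finset.mem_Icc.mp hj
          omega
        · intro i hi
          have := Finset.mem_range.mp hi
          have h1 : s - (s - i) = i := by omega
          rw [h1]
      rw [← hre]
      rw [add_comm] at hco
      exact hco

lemma zero_mem_idealIntCl {R : Type*} [CommRing R] (I : Ideal R) : (0 : R) ∈ idealIntCl I :=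
  ⟨1, one_pos, 0, by simp, by simp⟩

/-- The integral closure of an ideal is an ideal. -/
def idealIntClIdeal {R : Type*} [CommRing R] (I : Ideal R) : Ideal R where
  carrier := idealIntCl I
  zero_mem' := zero_mem_idealIntCl I
  add_mem' := by
    intro x y hx hy
    refine idealIntCl_of_mem_intCl ?_
    have : Polynomial.C (x + y) * Polynomial.X
        = Polynomial.C x * Polynomial.X + Polynomial.C y * Polynomial.X := by
      rw [map_add, add_mul]
    rw [this]
    exact add_mem (mem_intCl_of_idealIntCl hx) (mem_intCl_of_idealIntCl hy)
  smul_mem' := by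
    intro r x hx
    refine idealIntCl_of_mem_intCl ?_
    have hr : (Polynomial.C r) ∈ reesAlgebra I := by
      rw [mem_reesAlgebra_iff]
      intro i
      rw [Polynomial.coeff_C]
      split
      · subst ‹i = 0›; simp
      · exact zero_mem _
    have : Polynomial.C (r • x) * Polynomial.X
        = (algebraMap (reesAlgebra I) (Polynomial R)) ⟨Polynomial.C r, hr⟩
          * (Polynomial.C x * Polynomial.X) := by
      show Polynomial.C (r * x) * Polynomial.X = Polynomial.C r * (Polynomial.C x * Polynomial.X)
      rw [map_mul]; ring
    rw [this]
    exact mul_mem (Subalgebra.algebraMap_mem _ _) (mem_intCl_of_idealIntCl hx)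

lemma coe_idealIntClIdeal {R : Type*} [CommRing R] (I : Ideal R) :
    (idealIntClIdeal I : Set R) = idealIntCl I := rfl

lemma map_mem_idealIntCl {R S : Type*} [CommRing R] [CommRing S] (f : R →+* S) {I : Ideal R}
    {x : R} (hx : x ∈ idealIntCl I) : f x ∈ idealIntCl (I.map f) := by
  obtain ⟨s, hs, a, ha, heq⟩ := hx
  refine ⟨s, hs, fun i => f (a i), ?_, ?_⟩
  · intro i hi
    rw [← Ideal.map_pow]
    exact Ideal.mem_map_of_mem f (ha i hi)
  · have := congrArg f heq
    simpa [map_add, map_pow, map_sum, map_mul] using this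

/-- `φ_n : k[z_1,…,z_n] → k[z_1,…,z_{n-1}]`, sending the last variable to `1`. -/
noncomputable def deleteLastVar (k : Type*) [Field k] (n : ℕ) :
    MvPolynomial (Fin (n + 1)) k →+* MvPolynomial (Fin n) k :=
  (aeval fun i : Fin (n + 1) => Fin.lastCases 1 (fun j => X j) i).toRingHom

lemma deleteLastVar_apply {k : Type*} [Field k] {n : ℕ} (p : MvPolynomial (Fin (n + 1)) k) :
    deleteLastVar k n p
      = (aeval fun i : Fin (n + 1) => Fin.lastCases 1 (fun j => X j) i) p := by
  simp only [deleteLastVar, AlgHom.toRingHom_eq_coe, RingHom.coe_coe]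

lemma IsMonomialIdeal.pow {k : Type*} [Field k] {σ : Type*} {J : Ideal (MvPolynomial σ k)}
    (h : IsMonomialIdeal J) (i : ℕ) : IsMonomialIdeal (J ^ i) := by
  induction i with
  | zero =>
    refine ⟨{0}, ?_⟩
    have himg : (fun d => monomial d (1 : k)) '' ({0} : Set (σ →₀ ℕ)) = {1} := by
      simp [monomial_zero']
    rw [pow_zero, himg, Ideal.span_singleton_one]
    exact Ideal.one_eq_top
  | succ i ih =>
    obtain ⟨G, hG⟩ := ih
    obtain ⟨G0, hG0⟩ := h
    refine ⟨Set.image2 (· + ·) G G0, ?_⟩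
    rw [pow_succ]
    conv_lhs => rw [hG, hG0]
    rw [Ideal.span_mul_span]
    congr 1
    ext q
    simp only [Set.mem_iUnion, Set.mem_singleton_iff, Set.mem_image, Set.mem_image2]
    constructor
    · rintro ⟨_, ⟨⟨a, ha, rfl⟩, _, ⟨⟨b, hb, rfl⟩, rfl⟩⟩⟩
      exact ⟨a + b, ⟨a, ha, b, hb, rfl⟩, by beta_reduce; rw [monomial_mul, one_mul]⟩
    · rintro ⟨e, ⟨a, ha, b, hb, rfl⟩, rfl⟩
      exact ⟨_, ⟨a, ha, rfl⟩, _, ⟨b, hb, rfl⟩, by beta_reduce; rw [monomial_mul, one_mul]⟩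

lemma deleteLastVar_rename {k : Type*} [Field k] {n : ℕ} (p : MvPolynomial (Fin n) k) :
    deleteLastVar k n ((rename Fin.castSucc) p) = p := by
  rw [deleteLastVar_apply, aeval_rename]
  have : ((fun i : Fin (n + 1) => Fin.lastCases 1 (fun j => X j) i) ∘ Fin.castSucc)
      = (X : Fin n → MvPolynomial (Fin n) k) := by
    funext j
    simp [Function.comp, Fin.lastCases_castSucc]
  rw [this, aeval_X_left_apply]

lemma deleteLastVar_monomial {k : Type*} [Field k] {n : ℕ} (d : Fin (n + 1) →₀ ℕ) :
    (deleteLastVar k n) (monomial d (1 : k))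
      = ∏ j : Fin n, X j ^ d j.castSucc := by
  rw [deleteLastVar_apply, aeval_monomial, map_one, one_mul]
  rw [Finsupp.prod_fintype _ _ (fun i => pow_zero _)]
  rw [Fin.prod_univ_castSucc]
  simp only [Fin.lastCases_castSucc, Fin.lastCases_last, one_pow, mul_one]

lemma key_monomial {k : Type*} [Field k] {n : ℕ} (d : Fin (n + 1) →₀ ℕ) :
    (rename Fin.castSucc) ((deleteLastVar k n) (monomial d (1 : k)))
      * X (Fin.last n) ^ d (Fin.last n) = monomial d (1 : k) := by
  rw [deleteLastVar_monomial, map_prod]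
  have hpsi : ∀ j : Fin n, (rename Fin.castSucc) ((X j : MvPolynomial (Fin n) k) ^ d j.castSucc)
      = (X (Fin.castSucc j) : MvPolynomial (Fin (n+1)) k) ^ d j.castSucc := by
    intro j
    rw [map_pow, rename_X]
  rw [Finset.prod_congr rfl (fun j _ => hpsi j),
    ← Fin.prod_univ_castSucc (fun i => (X i : MvPolynomial (Fin (n+1)) k) ^ d i)]
  rw [monomial_eq, C_1, one_mul, Finsupp.prod_pow]

lemma exists_pow_mul_mem {k : Type*} [Field k] {n : ℕ}
    {K : Ideal (MvPolynomial (Fin (n + 1)) k)} (hK : IsMonomialIdeal K)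
    {b : MvPolynomial (Fin n) k} (hb : b ∈ K.map (deleteLastVar k n)) :
    ∃ N0 : ℕ, ∀ N ≥ N0, (rename Fin.castSucc) b * X (Fin.last n) ^ N ∈ K := by
  obtain ⟨G, hG⟩ := hK
  rw [hG, Ideal.map_span] at hb
  have hmemK : ∀ d ∈ G, monomial d (1 : k) ∈ K := by
    intro d hd
    rw [hG]
    exact Ideal.subset_span ⟨d, hd, rfl⟩
  clear hG
  induction hb using Submodule.span_induction with
  | mem q hq =>
    obtain ⟨_, ⟨d, hd, rfl⟩, rfl⟩ := hq
    refine ⟨d (Fin.last n), fun N hN => ?_⟩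
    have hsplit : N = d (Fin.last n) + (N - d (Fin.last n)) := (Nat.add_sub_cancel' hN).symm
    rw [hsplit, pow_add, ← mul_assoc, key_monomial]
    exact Ideal.mul_mem_right _ _ (hmemK d hd)
  | zero => exact ⟨0, fun N _ => by rw [map_zero, zero_mul]; exact zero_mem K⟩
  | add q r hq hr ihq ihr =>
    obtain ⟨N1, h1⟩ := ihq
    obtain ⟨N2, h2⟩ := ihr
    refine ⟨max N1 N2, fun N hN => ?_⟩
    rw [map_add, add_mul]
    exact add_mem (h1 N (le_trans (le_max_left _ _) hN)) (h2 N (le_trans (le_max_right _ _) hN))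
  | smul r q hq ihq =>
    obtain ⟨N1, h1⟩ := ihq
    refine ⟨N1, fun N hN => ?_⟩
    rw [smul_eq_mul, map_mul, mul_assoc]
    exact Ideal.mul_mem_left _ _ (h1 N hN)

theorem stmt5 (k : Type*) [Field k] (n : ℕ)
    (J : Ideal (MvPolynomial (Fin (n + 1)) k)) (hJ : IsMonomialIdeal J) :
    (Ideal.span ((deleteLastVar k n) '' idealIntCl J) :
        Set (MvPolynomial (Fin n) k)) =
      idealIntCl (Ideal.map (deleteLastVar k n) J) := by
  set φ := deleteLastVar k n with hφ
  apply Set.Subset.antisymm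
  · have h1 : φ '' idealIntCl J ⊆ idealIntCl (J.map φ) := by
      rintro _ ⟨x, hx, rfl⟩
      exact map_mem_idealIntCl φ hx
    have h2 : Ideal.span (φ '' idealIntCl J) ≤ idealIntClIdeal (J.map φ) :=
      Ideal.span_le.mpr h1
    exact fun y hy => h2 hy
  · intro x hx
    obtain ⟨s, hs, b, hb, heq⟩ := hx
    have hch : ∀ i : ℕ, ∃ N0 : ℕ, ∀ N ≥ N0, i ∈ Finset.Icc 1 s →
        (rename Fin.castSucc) (b i) * X (Fin.last n) ^ N ∈ J ^ i := by
      intro i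
      by_cases hi : i ∈ Finset.Icc 1 s
      · have hbi : b i ∈ (J ^ i).map φ := by
          rw [Ideal.map_pow]
          exact hb i hi
        obtain ⟨N0, hN0⟩ := exists_pow_mul_mem (hJ.pow i) hbi
        exact ⟨N0, fun N hN _ => hN0 N hN⟩
      · exact ⟨0, fun N _ hi' => absurd hi' hi⟩
    choose N0 hN0 using hch
    set N := (Finset.Icc 1 s).sup N0 with hNdef
    set ψ := (rename (R := k) Fin.castSucc) with hψ
    set t := (X (Fin.last n) : MvPolynomial (Fin (n + 1)) k) with ht
    set y := ψ x * t ^ N with hy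
    have hymem : y ∈ idealIntCl J := by
      refine ⟨s, hs, fun i => ψ (b i) * t ^ (N * i), ?_, ?_⟩
      · intro i hi
        have h1i : 1 ≤ i := (Finset.mem_Icc.mp hi).1
        have hNi : N * i ≥ N0 i :=
          le_trans (Finset.le_sup hi) (Nat.le_mul_of_pos_right N (by omega))
        exact hN0 i (N * i) hNi hi
      · have hterm : ∀ i ∈ Finset.Icc 1 s,
            (ψ (b i) * t ^ (N * i)) * (ψ x * t ^ N) ^ (s - i)
            = ψ (b i * x ^ (s - i)) * t ^ (N * s) := by
          intro i hi
          obtain ⟨h1, h2⟩ := Finset.mem_Icc.mp hi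
          rw [mul_pow, ← map_pow, ← pow_mul]
          calc ψ (b i) * t ^ (N * i) * (ψ (x ^ (s - i)) * t ^ (N * (s - i)))
              = ψ (b i) * ψ (x ^ (s - i)) * (t ^ (N * i) * t ^ (N * (s - i))) := by ring
            _ = ψ (b i * x ^ (s - i)) * t ^ (N * s) := by
                rw [← map_mul, ← pow_add, ← Nat.mul_add, Nat.add_sub_cancel' h2]
        rw [hy, Finset.sum_congr rfl hterm, mul_pow, ← map_pow, ← pow_mul,
          ← Finset.sum_mul, ← map_sum, ← add_mul, ← map_add, heq, map_zero, zero_mul]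
    have hphiy : φ y = x := by
      have hft : φ t = 1 := by
        rw [ht, hφ, deleteLastVar_apply, aeval_X, Fin.lastCases_last]
      rw [hy, map_mul, map_pow, hft, one_pow, mul_one, hψ, hφ, deleteLastVar_rename]
    exact Ideal.subset_span ⟨y, hymem, hphiy⟩
end

section
/- If y^b is a minimal monomial generator of the integral closure of E_q^r, then for any nonempty sets S ⊆ T ⊊ [q] one has b_S ≤ b_T. -/
open MvPolynomial

/-- The generator `ε_i = ∏_{A ∋ i} y_A` of the extremal ideal. -/
noncomputable def extGen (k : Type*) [Field k] (q : ℕ) (i : Fin q) :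
    MvPolynomial (EIdx q) k :=
  ∏ A : EIdx q, if i ∈ A.1 then X A else 1

/-- The `q`-extremal ideal `E_q = (ε_1, …, ε_q)`. -/
noncomputable def extIdeal (k : Type*) [Field k] (q : ℕ) :
    Ideal (MvPolynomial (EIdx q) k) :=
  Ideal.span (Set.range (extGen k q))

/-- The monomial `y^b = ∏_A y_A^{b_A}`. -/
noncomputable def ymon (k : Type*) [Field k] (q : ℕ) (b : EIdx q → ℕ) :
    MvPolynomial (EIdx q) k :=
  ∏ A : EIdx q, X A ^ b A

/-- The integral closure is closed under multiplication by ring elements. -/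
lemma intCl_mul {R : Type*} [CommRing R] (J : Ideal R) (m x : R)
    (hx : x ∈ idealIntCl J) : m * x ∈ idealIntCl J := by
  obtain ⟨s, hs, a, ha, heq⟩ := hx
  refine ⟨s, hs, fun i => m ^ i * a i,
    fun i hi => Ideal.mul_mem_left _ _ (ha i hi), ?_⟩
  have key : ∀ i ∈ Finset.Icc 1 s,
      m ^ i * a i * (m * x) ^ (s - i) = m ^ s * (a i * x ^ (s - i)) := by
    intro i hi
    have hi' : i ≤ s := (Finset.mem_Icc.mp hi).2
    rw [mul_pow, show m ^ s = m ^ i * m ^ (s - i) by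
      rw [← pow_add]; congr 1; omega]
    ring
  rw [Finset.sum_congr rfl key, ← Finset.mul_sum, mul_pow, ← mul_add, heq, mul_zero]

/-- If a ring endomorphism maps `J` into itself, it preserves the integral closure
of `J ^ r`. -/
lemma intCl_map {R : Type*} [CommRing R] (J : Ideal R) (r : ℕ) (φ : R →+* R)
    (hJ : J.map φ ≤ J) (x : R) (hx : x ∈ idealIntCl (J ^ r)) :
    φ x ∈ idealIntCl (J ^ r) := by
  obtain ⟨s, hs, a, ha, heq⟩ := hx
  refine ⟨s, hs, fun i => φ (a i), fun i hi => ?_, ?_⟩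
  · have h1 : φ (a i) ∈ ((J ^ r) ^ i).map φ := Ideal.mem_map_of_mem φ (ha i hi)
    rw [Ideal.map_pow, Ideal.map_pow] at h1
    exact Ideal.pow_right_mono (Ideal.pow_right_mono hJ r) i h1
  · have h2 := congrArg φ heq
    simpa [map_add, map_pow, map_sum, map_mul] using h2

lemma prod_split {M : Type*} [CommMonoid M] {ι : Type*} [Fintype ι] [DecidableEq ι]
    (a b : ι) (hab : a ≠ b) (g : ι → M) :
    ∏ x, g x = g a * g b * ∏ x ∈ (Finset.univ.erase a).erase b, g x := by
  rw [← Finset.mul_prod_erase _ _ (Finset.mem_univ a),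
    ← Finset.mul_prod_erase _ g
      (Finset.mem_erase.mpr ⟨hab.symm, Finset.mem_univ b⟩), mul_assoc]

theorem stmt7 (k : Type*) [Field k] (q r : ℕ) (hq : 1 ≤ q) (hr : 1 ≤ r)
    (b : EIdx q → ℕ)
    -- `y^b` is a minimal monomial generator of the integral closure of `E_q^r`:
    (hmem : ymon k q b ∈ idealIntCl ((extIdeal k q) ^ r))
    (hminimal : ∀ A : EIdx q, 0 < b A →
      ymon k q (fun B => if B = A then b B - 1 else b B) ∉
        idealIntCl ((extIdeal k q) ^ r)) :
    ∀ (S T : Finset (Fin q)) (hS : S.Nonempty) (hST : S ⊆ T)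
      (_ : T ⊂ Finset.univ),
      b ⟨S, hS⟩ ≤ b ⟨T, hS.mono hST⟩ := by
  intro S T hS hST hTu
  by_cases hSTeq : S = T
  · cases hSTeq; exact le_rfl
  set S' : EIdx q := ⟨S, hS⟩ with hS'def
  set T' : EIdx q := ⟨T, hS.mono hST⟩ with hT'def
  have hne : S' ≠ T' := fun h => hSTeq (congrArg Subtype.val h)
  by_contra hlt
  push_neg at hlt
  -- the substitution y_S ↦ 1, y_T ↦ y_S * y_T
  set f : EIdx q → MvPolynomial (EIdx q) k :=
    fun A => if A = S' then 1 else if A = T' then X S' * X T' else X A with hfdef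
  have hfS : f S' = 1 := by simp [hfdef]
  have hfT : f T' = X S' * X T' := by simp [hfdef, hne.symm]
  have hfO : ∀ A : EIdx q, A ≠ S' → A ≠ T' → f A = X A := by
    intro A h1 h2; simp [hfdef, h1, h2]
  -- ψ maps each generator to a multiple of itself
  have hgen : ∀ i : Fin q, (aeval f) (extGen k q i)
      = extGen k q i * (if i ∈ T ∧ i ∉ S then X S' else 1) := by
    intro i
    unfold extGen
    rw [map_prod]
    simp only [apply_ite (aeval f), map_one, aeval_X]
    rw [prod_split S' T' hne (fun A => if i ∈ A.1 then f A else 1),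
      prod_split S' T' hne (fun A : EIdx q => if i ∈ A.1 then X A else 1)]
    have hrest : (∏ x ∈ (Finset.univ.erase S').erase T',
        (if i ∈ x.1 then f x else 1))
        = ∏ x ∈ (Finset.univ.erase S').erase T',
          (if i ∈ x.1 then X x else 1) := by
      refine Finset.prod_congr rfl ?_
      intro A hA
      have h2 : A ≠ T' := (Finset.mem_erase.mp hA).1
      have h1 : A ≠ S' := (Finset.mem_erase.mp (Finset.mem_erase.mp hA).2).1
      rw [hfO A h1 h2]
    rw [hrest, hfS, hfT]
    by_cases hiS : i ∈ S
    · have hiT : i ∈ T := hST hiS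
      simp only [hS'def, hT'def, hiS, hiT, if_true, hiS, not_true,
        and_false, if_false]
      ring
    · by_cases hiT : i ∈ T
      · simp only [hS'def, hT'def, hiS, hiT, if_true, if_false, not_false_iff,
          and_true, and_self]
        ring
      · simp only [hS'def, hT'def, hiS, hiT, if_false, false_and]
        ring
  -- ψ maps the ideal into itself
  have hE : (extIdeal k q).map ((aeval f : MvPolynomial (EIdx q) k →ₐ[k] _) :
      MvPolynomial (EIdx q) k →+* MvPolynomial (EIdx q) k) ≤ extIdeal k q := by
    rw [extIdeal, Ideal.map_span, Ideal.span_le]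
    rintro _ ⟨_, ⟨i, rfl⟩, rfl⟩
    show (aeval f) (extGen k q i) ∈ extIdeal k q
    rw [hgen]
    exact Ideal.mul_mem_right _ _ (Ideal.subset_span ⟨i, rfl⟩)
  have hb0 : 0 < b S' := lt_of_le_of_lt (Nat.zero_le _) hlt
  apply hminimal S' hb0
  -- the decreased monomial equals X S' ^ c * ψ(y^b)
  have hmon : X S' ^ (b S' - 1 - b T') * (aeval f) (ymon k q b)
      = ymon k q (fun B => if B = S' then b B - 1 else b B) := by
    unfold ymon
    rw [map_prod]
    simp only [map_pow, aeval_X]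
    rw [prod_split S' T' hne (fun A : EIdx q => f A ^ b A),
      prod_split S' T' hne
        (fun A : EIdx q => X A ^ (if A = S' then b A - 1 else b A))]
    have hrest : (∏ x ∈ (Finset.univ.erase S').erase T',
        X x ^ (if x = S' then b x - 1 else b x))
        = ∏ x ∈ (Finset.univ.erase S').erase T', (f x ^ b x) := by
      refine Finset.prod_congr rfl ?_
      intro A hA
      have h2 : A ≠ T' := (Finset.mem_erase.mp hA).1
      have h1 : A ≠ S' := (Finset.mem_erase.mp (Finset.mem_erase.mp hA).2).1
      rw [hfO A h1 h2, if_neg h1]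
    rw [hrest, hfS, hfT, if_pos rfl, if_neg hne.symm, one_pow, mul_pow]
    have harith : b S' - 1 - b T' + b T' = b S' - 1 := by omega
    calc X S' ^ (b S' - 1 - b T') * (1 * (X S' ^ b T' * X T' ^ b T')
          * ∏ x ∈ (Finset.univ.erase S').erase T', f x ^ b x)
        = (X S' ^ (b S' - 1 - b T') * X S' ^ b T') * X T' ^ b T'
          * ∏ x ∈ (Finset.univ.erase S').erase T', f x ^ b x := by ring
      _ = X S' ^ (b S' - 1) * X T' ^ b T'
          * ∏ x ∈ (Finset.univ.erase S').erase T', f x ^ b x := by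
          rw [← pow_add, harith]
  rw [← hmon]
  refine intCl_mul _ _ _ ?_
  exact intCl_map (extIdeal k q) r _ hE _ hmem
end

section
/- For every r ≥ 1, the square of the 3-extremal ideal is integrally closed: \overline{E_3^2} = E_3^2. More precisely, every monomial y^b with exponents b_1,b_2,b_3,b_{12},b_{13},b_{23},b_{123} satisfying: there exist nonnegative rationals α_1,α_2,α_3 with α_1+α_2+α_3 = 2, b_{123} ≥ 2, b_{ij} ≥ α_i+α_j, b_i ≥ α_i, is divisible by ε_i ε_j for some i,j ∈ {1,2,3}. -/
open MvPolynomial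

section Val
variable (k : Type*) [Field k]

noncomputable def PhiW (w : EIdx 3 → ℕ) :
    MvPolynomial (EIdx 3) k →ₐ[k] Polynomial (MvPolynomial (EIdx 3) k) :=
  aeval (fun A => Polynomial.C (X A) * Polynomial.X ^ w A)

def wdegF (w : EIdx 3 → ℕ) (d : EIdx 3 →₀ ℕ) : ℕ := ∑ A : EIdx 3, w A * d A

lemma PhiW_monomial (w : EIdx 3 → ℕ) (d : EIdx 3 →₀ ℕ) (c : k) :
    PhiW k w (monomial d c) = Polynomial.monomial (wdegF w d) (monomial d c) := by
  rw [PhiW, aeval_monomial, ← Polynomial.C_mul_X_pow_eq_monomial, Finsupp.prod]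
  have h1 : ∀ A ∈ d.support,
      (Polynomial.C (X A : MvPolynomial (EIdx 3) k) * Polynomial.X ^ w A) ^ d A
      = Polynomial.C ((X A : MvPolynomial (EIdx 3) k) ^ d A) * Polynomial.X ^ (w A * d A) := by
    intro A _
    rw [mul_pow, ← Polynomial.C_pow, ← pow_mul]
  rw [Finset.prod_congr rfl h1, Finset.prod_mul_distrib, ← map_prod,
    Finset.prod_pow_eq_pow_sum]
  have h2 : ∑ A ∈ d.support, w A * d A = wdegF w d := by
    refine Finset.sum_subset (Finset.subset_univ _) ?_
    intro A _ hA
    rw [Finsupp.notMem_support_iff.mp hA, mul_zero]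
  have h3 : (algebraMap k (Polynomial (MvPolynomial (EIdx 3) k)) c)
      = Polynomial.C (MvPolynomial.C c) := by
    rw [Polynomial.algebraMap_apply]; rfl
  rw [h2, h3, monomial_eq, Finsupp.prod]
  rw [map_mul]
  ring

lemma coeff_PhiW (w : EIdx 3 → ℕ) (x : MvPolynomial (EIdx 3) k) (b : EIdx 3 →₀ ℕ) :
    MvPolynomial.coeff b (Polynomial.coeff (PhiW k w x) (wdegF w b))
      = MvPolynomial.coeff b x := by
  conv_lhs => rw [← support_sum_monomial_coeff x]
  rw [map_sum, Polynomial.finset_sum_coeff]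
  simp only [PhiW_monomial, Polynomial.coeff_monomial]
  rw [MvPolynomial.coeff_sum]
  rw [Finset.sum_eq_single b]
  · rw [if_pos rfl, MvPolynomial.coeff_monomial, if_pos rfl]
  · intro d _ hdb
    split_ifs with h
    · rw [MvPolynomial.coeff_monomial, if_neg hdb]
    · exact MvPolynomial.coeff_zero _
  · intro hbx
    rw [if_pos rfl, MvPolynomial.coeff_monomial, if_pos rfl]
    exact (MvPolynomial.notMem_support_iff.mp hbx)

lemma trailingDegree_PhiW_le (w : EIdx 3 → ℕ) {x : MvPolynomial (EIdx 3) k}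
    {b : EIdx 3 →₀ ℕ} (hb : b ∈ x.support) :
    (PhiW k w x).trailingDegree ≤ (wdegF w b : ℕ∞) := by
  apply Polynomial.trailingDegree_le_of_ne_zero
  intro h0
  apply MvPolynomial.mem_support_iff.mp hb
  rw [← coeff_PhiW k w x b, h0, MvPolynomial.coeff_zero]

lemma le_td (p : Polynomial (MvPolynomial (EIdx 3) k)) (c : ℕ∞)
    (h : ∀ n : ℕ, (n : ℕ∞) < c → p.coeff n = 0) : c ≤ p.trailingDegree := by
  by_contra hc
  push_neg at hc
  have hp : p ≠ 0 := by
    intro h0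
    rw [h0, Polynomial.trailingDegree_zero] at hc
    exact (not_top_lt hc)
  exact Polynomial.coeff_natTrailingDegree_ne_zero.mpr hp
    (h _ (lt_of_le_of_lt Polynomial.natTrailingDegree_le_trailingDegree hc))

lemma le_td_sum {ι : Type*} (u : Finset ι) (f : ι → Polynomial (MvPolynomial (EIdx 3) k))
    (c : ℕ∞) (h : ∀ i ∈ u, c ≤ (f i).trailingDegree) :
    c ≤ (∑ i ∈ u, f i).trailingDegree := by
  apply le_td
  intro n hn
  rw [Polynomial.finset_sum_coeff]
  exact Finset.sum_eq_zero fun i hi =>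
    Polynomial.coeff_eq_zero_of_lt_trailingDegree (lt_of_lt_of_le hn (h i hi))

lemma td_prod {ι : Type*} (u : Finset ι) (f : ι → Polynomial (MvPolynomial (EIdx 3) k)) :
    (∏ i ∈ u, f i).trailingDegree = ∑ i ∈ u, (f i).trailingDegree := by
  induction u using Finset.cons_induction with
  | empty => simp [Polynomial.trailingDegree_one]
  | cons a s ha ih => rw [Finset.prod_cons, Finset.sum_cons, Polynomial.trailingDegree_mul, ih]

lemma td_PhiW_gen (w : EIdx 3 → ℕ) (i : Fin 3) :
    (PhiW k w (extGen k 3 i)).trailingDegree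
      = ((∑ A : EIdx 3, if i ∈ A.1 then w A else 0 : ℕ) : ℕ∞) := by
  rw [extGen, map_prod, td_prod, Nat.cast_sum]
  apply Finset.sum_congr rfl
  intro A _
  rw [apply_ite (PhiW k w), map_one, PhiW, aeval_X]
  split_ifs with h
  · rw [Polynomial.C_mul_X_pow_eq_monomial, Polynomial.trailingDegree_monomial (X_ne_zero A)]
  · rw [Polynomial.trailingDegree_one, Nat.cast_zero]

noncomputable def wIdeal (w : EIdx 3 → ℕ) (c : ℕ) : Ideal (MvPolynomial (EIdx 3) k) where
  carrier := {f | (c : ℕ∞) ≤ (PhiW k w f).trailingDegree}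
  zero_mem' := by
    simp only [Set.mem_setOf_eq, map_zero, Polynomial.trailingDegree_zero]
    exact le_top
  add_mem' := by
    intro f g hf hg
    simp only [Set.mem_setOf_eq, map_add] at *
    apply le_td
    intro n hn
    rw [Polynomial.coeff_add,
      Polynomial.coeff_eq_zero_of_lt_trailingDegree (lt_of_lt_of_le hn hf),
      Polynomial.coeff_eq_zero_of_lt_trailingDegree (lt_of_lt_of_le hn hg), add_zero]
  smul_mem' := by
    intro g f hf
    simp only [Set.mem_setOf_eq, smul_eq_mul, map_mul, Polynomial.trailingDegree_mul] at *
    exact le_add_of_nonneg_of_le zero_le hf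

lemma mem_wIdeal (w : EIdx 3 → ℕ) (c : ℕ) (f : MvPolynomial (EIdx 3) k) :
    f ∈ wIdeal k w c ↔ (c : ℕ∞) ≤ (PhiW k w f).trailingDegree := Iff.rfl

lemma extIdeal_pow_le (w : EIdx 3 → ℕ) (m : ℕ)
    (hgen : ∀ i : Fin 3, (m : ℕ∞) ≤ (PhiW k w (extGen k 3 i)).trailingDegree) (n : ℕ) :
    (extIdeal k 3) ^ n ≤ wIdeal k w (n * m) := by
  induction n with
  | zero =>
    intro f _
    rw [mem_wIdeal]
    simp
  | succ n ih =>
    rw [pow_succ, Ideal.mul_le]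
    intro f hf g hg
    have h1 := (mem_wIdeal k w _ f).mp (ih hf)
    have h2 : (m : ℕ∞) ≤ (PhiW k w g).trailingDegree := by
      have hE : extIdeal k 3 ≤ wIdeal k w m := by
        rw [extIdeal, Ideal.span_le]
        rintro _ ⟨i, rfl⟩
        exact hgen i
      exact (mem_wIdeal k w m g).mp (hE hg)
    rw [mem_wIdeal, map_mul, Polynomial.trailingDegree_mul]
    calc ((((n+1) * m : ℕ)) : ℕ∞) = ((n * m : ℕ) : ℕ∞) + (m : ℕ∞) := by
          push_cast; ring
    _ ≤ _ := add_le_add h1 h2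

lemma td_pow' (p : Polynomial (MvPolynomial (EIdx 3) k)) (hp : p ≠ 0) (n : ℕ) :
    (p ^ n).trailingDegree = ((n * p.natTrailingDegree : ℕ) : ℕ∞) := by
  induction n with
  | zero => simp [Polynomial.trailingDegree_one]
  | succ n ih =>
    rw [pow_succ, Polynomial.trailingDegree_mul, ih,
      Polynomial.trailingDegree_eq_natTrailingDegree hp]
    push_cast
    ring

lemma support_wdeg_bound (w : EIdx 3 → ℕ) (m r : ℕ)
    (hgen : ∀ i : Fin 3, (m : ℕ∞) ≤ (PhiW k w (extGen k 3 i)).trailingDegree)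
    {x : MvPolynomial (EIdx 3) k} (hx : x ∈ idealIntCl ((extIdeal k 3) ^ r))
    {b : EIdx 3 →₀ ℕ} (hb : b ∈ x.support) :
    r * m ≤ wdegF w b := by
  obtain ⟨s, hs, a, ha, heq⟩ := hx
  have hΦ : PhiW k w x ≠ 0 := by
    intro h0
    apply MvPolynomial.mem_support_iff.mp hb
    rw [← coeff_PhiW k w x b, h0]
    simp
  set T := (PhiW k w x).natTrailingDegree with hT
  have hTd : (PhiW k w x).trailingDegree = (T : ℕ∞) :=
    Polynomial.trailingDegree_eq_natTrailingDegree hΦ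
  have key : r * m ≤ T := by
    by_contra hlt
    push_neg at hlt
    have hsum : ((s * T + 1 : ℕ) : ℕ∞)
        ≤ (∑ i ∈ Finset.Icc 1 s, PhiW k w (a i * x ^ (s - i))).trailingDegree := by
      apply le_td_sum
      intro i hi
      obtain ⟨hi1, hi2⟩ := Finset.mem_Icc.mp hi
      rw [map_mul, Polynomial.trailingDegree_mul, map_pow]
      have hai : ((i * (r * m) : ℕ) : ℕ∞) ≤ (PhiW k w (a i)).trailingDegree := by
        have h1 : a i ∈ (extIdeal k 3) ^ (r * i) := by
          have h2 := ha i hi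
          rwa [← pow_mul] at h2
        have h3 := (mem_wIdeal k w _ _).mp (extIdeal_pow_le k w m hgen (r * i) h1)
        have h4 : r * i * m = i * (r * m) := by ring
        rwa [h4] at h3
      have hxp : ((PhiW k w x) ^ (s - i)).trailingDegree = (((s - i) * T : ℕ) : ℕ∞) :=
        td_pow' k _ hΦ _
      calc ((s * T + 1 : ℕ) : ℕ∞) ≤ ((i * (r * m) + (s - i) * T : ℕ) : ℕ∞) := by
            rw [Nat.cast_le]
            have hle : i * (T + 1) ≤ i * (r * m) := Nat.mul_le_mul_left i (by omega)
            have hid : i * (T + 1) + (s - i) * T = s * T + i := by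
              obtain ⟨u, rfl⟩ : ∃ u, s = i + u := ⟨s - i, by omega⟩
              have h5 : i + u - i = u := by omega
              rw [h5]; ring
            omega
      _ ≤ _ := by
            rw [Nat.cast_add]
            exact add_le_add hai (le_of_eq hxp.symm)
    have hxs : ((PhiW k w x) ^ s).trailingDegree = ((s * T : ℕ) : ℕ∞) := td_pow' k _ hΦ _
    have hneg : x ^ s = -∑ i ∈ Finset.Icc 1 s, a i * x ^ (s - i) :=
      eq_neg_of_add_eq_zero_left heq
    have : ((s * T + 1 : ℕ) : ℕ∞) ≤ ((s * T : ℕ) : ℕ∞) := by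
      rw [← hxs, ← map_pow, hneg, map_neg, Polynomial.trailingDegree_neg, map_sum]
      exact hsum
    rw [Nat.cast_le] at this
    omega
  have hle2 := trailingDegree_PhiW_le k w hb
  rw [hTd, Nat.cast_le] at hle2
  omega

end Val

lemma keyNat (r b1 b2 b3 b12 b13 b23 b123 : ℕ)
    (h1 : r ≤ b123) (h2 : r ≤ b1+b23) (h3 : r ≤ b2+b13) (h4 : r ≤ b3+b12)
    (h5 : r ≤ b12+b13) (h6 : r ≤ b12+b23) (h7 : r ≤ b13+b23)
    (h8 : r ≤ b1+b2+b3) (h9 : 2*r ≤ b12+b13+b23) :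
    ∃ c1 c2 c3 : ℕ, c1+c2+c3 = r ∧ c1 ≤ b1 ∧ c2 ≤ b2 ∧ c3 ≤ b3 ∧
      c1+c2 ≤ b12 ∧ c1+c3 ≤ b13 ∧ c2+c3 ≤ b23 ∧ r ≤ b123 := by
  refine ⟨max (r - b23) (r - (b2 + b3)),
    max (r - max (r - b23) (r - (b2 + b3)) - b3) (r - b13),
    r - max (r - b23) (r - (b2 + b3)) - max (r - max (r - b23) (r - (b2 + b3)) - b3) (r - b13),
    ?_, ?_, ?_, ?_, ?_, ?_, ?_, ?_⟩ <;> omega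

def eA1 : EIdx 3 := ⟨{0}, by decide⟩
def eA2 : EIdx 3 := ⟨{1}, by decide⟩
def eA3 : EIdx 3 := ⟨{2}, by decide⟩
def eA12 : EIdx 3 := ⟨{0,1}, by decide⟩
def eA13 : EIdx 3 := ⟨{0,2}, by decide⟩
def eA23 : EIdx 3 := ⟨{1,2}, by decide⟩
def eA123 : EIdx 3 := ⟨{0,1,2}, by decide⟩

lemma eA1_val : eA1.1 = {0} := rfl
lemma eA2_val : eA2.1 = {1} := rfl
lemma eA3_val : eA3.1 = {2} := rfl
lemma eA12_val : eA12.1 = {0,1} := rfl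
lemma eA13_val : eA13.1 = {0,2} := rfl
lemma eA23_val : eA23.1 = {1,2} := rfl
lemma eA123_val : eA123.1 = {0,1,2} := rfl

lemma eidx_cases (A : EIdx 3) : A = eA1 ∨ A = eA2 ∨ A = eA3 ∨ A = eA12 ∨
    A = eA13 ∨ A = eA23 ∨ A = eA123 := by
  revert A; decide

section Assemble
variable (k : Type*) [Field k]

lemma wdegF_ind (s : Finset (EIdx 3)) (b : EIdx 3 →₀ ℕ) :
    wdegF (fun A => if A ∈ s then 1 else 0) b = ∑ A ∈ s, b A := by
  rw [wdegF]
  simp only [ite_mul, one_mul, zero_mul]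
  rw [Finset.sum_ite_mem, Finset.univ_inter]

lemma hgen_of (s : Finset (EIdx 3)) (m : ℕ)
    (h : ∀ i : Fin 3, m ≤ ∑ A : EIdx 3, if i ∈ A.1 then (if A ∈ s then 1 else 0) else 0) :
    ∀ i : Fin 3, (m : ℕ∞)
      ≤ (PhiW k (fun A => if A ∈ s then 1 else 0) (extGen k 3 i)).trailingDegree := by
  intro i
  rw [td_PhiW_gen, Nat.cast_le]
  exact h i

lemma nine (r : ℕ) {x : MvPolynomial (EIdx 3) k}
    (hx : x ∈ idealIntCl ((extIdeal k 3) ^ r)) {b : EIdx 3 →₀ ℕ} (hb : b ∈ x.support) :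
    r ≤ b eA123 ∧ r ≤ b eA1 + b eA23 ∧ r ≤ b eA2 + b eA13 ∧ r ≤ b eA3 + b eA12 ∧
    r ≤ b eA12 + b eA13 ∧ r ≤ b eA12 + b eA23 ∧ r ≤ b eA13 + b eA23 ∧
    r ≤ b eA1 + b eA2 + b eA3 ∧ 2 * r ≤ b eA12 + b eA13 + b eA23 := by
  refine ⟨?_, ?_, ?_, ?_, ?_, ?_, ?_, ?_, ?_⟩
  · have h := support_wdeg_bound k _ 1 r (hgen_of k {eA123} 1 (by decide)) hx hb
    rw [wdegF_ind, Finset.sum_singleton] at h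
    omega
  · have h := support_wdeg_bound k _ 1 r (hgen_of k {eA1, eA23} 1 (by decide)) hx hb
    rw [wdegF_ind, Finset.sum_insert (by decide), Finset.sum_singleton] at h
    omega
  · have h := support_wdeg_bound k _ 1 r (hgen_of k {eA2, eA13} 1 (by decide)) hx hb
    rw [wdegF_ind, Finset.sum_insert (by decide), Finset.sum_singleton] at h
    omega
  · have h := support_wdeg_bound k _ 1 r (hgen_of k {eA3, eA12} 1 (by decide)) hx hb
    rw [wdegF_ind, Finset.sum_insert (by decide), Finset.sum_singleton] at h
    omega
  · have h := support_wdeg_bound k _ 1 r (hgen_of k {eA12, eA13} 1 (by decide)) hx hb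
    rw [wdegF_ind, Finset.sum_insert (by decide), Finset.sum_singleton] at h
    omega
  · have h := support_wdeg_bound k _ 1 r (hgen_of k {eA12, eA23} 1 (by decide)) hx hb
    rw [wdegF_ind, Finset.sum_insert (by decide), Finset.sum_singleton] at h
    omega
  · have h := support_wdeg_bound k _ 1 r (hgen_of k {eA13, eA23} 1 (by decide)) hx hb
    rw [wdegF_ind, Finset.sum_insert (by decide), Finset.sum_singleton] at h
    omega
  · have h := support_wdeg_bound k _ 1 r (hgen_of k {eA1, eA2, eA3} 1 (by decide)) hx hb
    rw [wdegF_ind, Finset.sum_insert (by decide), Finset.sum_insert (by decide),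
      Finset.sum_singleton] at h
    omega
  · have h := support_wdeg_bound k _ 2 r (hgen_of k {eA12, eA13, eA23} 2 (by decide)) hx hb
    rw [wdegF_ind, Finset.sum_insert (by decide), Finset.sum_insert (by decide),
      Finset.sum_singleton] at h
    omega

lemma monomial_mem (r : ℕ) (b : EIdx 3 →₀ ℕ) (c : k) (c1 c2 c3 : ℕ) (hsum : c1 + c2 + c3 = r)
    (hA : ∀ A : EIdx 3, (if (0 : Fin 3) ∈ A.1 then c1 else 0)
      + (if (1 : Fin 3) ∈ A.1 then c2 else 0) + (if (2 : Fin 3) ∈ A.1 then c3 else 0) ≤ b A) :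
    (monomial b c : MvPolynomial (EIdx 3) k) ∈ (extIdeal k 3) ^ r := by
  have hg : extGen k 3 0 ^ c1 * extGen k 3 1 ^ c2 * extGen k 3 2 ^ c3
      ∈ (extIdeal k 3) ^ r := by
    have hgen0 : ∀ i : Fin 3, extGen k 3 i ∈ extIdeal k 3 := fun i =>
      Ideal.subset_span (Set.mem_range_self i)
    rw [← hsum, pow_add, pow_add]
    exact Ideal.mul_mem_mul
      (Ideal.mul_mem_mul
        (Ideal.pow_mem_pow (hgen0 0) _)
        (Ideal.pow_mem_pow (hgen0 1) _))
      (Ideal.pow_mem_pow (hgen0 2) _)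
  have hdvd : extGen k 3 0 ^ c1 * extGen k 3 1 ^ c2 * extGen k 3 2 ^ c3
      ∣ (monomial b c : MvPolynomial (EIdx 3) k) := by
    have hm : (monomial b c : MvPolynomial (EIdx 3) k)
        = MvPolynomial.C c * ∏ A : EIdx 3, X A ^ b A := by
      rw [monomial_eq]
      congr 1
      rw [Finsupp.prod_fintype]
      intro A
      exact pow_zero _
    rw [hm]
    apply Dvd.dvd.mul_left
    have hrw : extGen k 3 0 ^ c1 * extGen k 3 1 ^ c2 * extGen k 3 2 ^ c3
        = ∏ A : EIdx 3, X A ^ ((if (0 : Fin 3) ∈ A.1 then c1 else 0)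
          + (if (1 : Fin 3) ∈ A.1 then c2 else 0) + (if (2 : Fin 3) ∈ A.1 then c3 else 0)) := by
      rw [extGen, extGen, extGen, ← Finset.prod_pow, ← Finset.prod_pow, ← Finset.prod_pow,
        ← Finset.prod_mul_distrib, ← Finset.prod_mul_distrib]
      apply Finset.prod_congr rfl
      intro A _
      rw [pow_add, pow_add]
      split_ifs <;> simp
    rw [hrw]
    exact Finset.prod_dvd_prod_of_dvd _ _ fun A _ => pow_dvd_pow _ (hA A)
  obtain ⟨q, hq⟩ := hdvd
  rw [hq]
  exact Ideal.mul_mem_right _ _ hg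

lemma part1sub (r : ℕ) :
    idealIntCl ((extIdeal k 3) ^ r) ⊆ ((extIdeal k 3) ^ r : Ideal _) := by
  intro x hx
  have hmem : ∀ b ∈ x.support,
      (monomial b (coeff b x) : MvPolynomial (EIdx 3) k) ∈ (extIdeal k 3) ^ r := by
    intro b hb
    obtain ⟨n1, n2, n3, n4, n5, n6, n7, n8, n9⟩ := nine k r hx hb
    obtain ⟨c1, c2, c3, hc, k1, k2, k3, k12, k13, k23, k123⟩ :=
      keyNat r (b eA1) (b eA2) (b eA3) (b eA12) (b eA13) (b eA23) (b eA123)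
        n1 n2 n3 n4 n5 n6 n7 n8 n9
    apply monomial_mem k r b _ c1 c2 c3 hc
    intro A
    rcases eidx_cases A with rfl | rfl | rfl | rfl | rfl | rfl | rfl <;>
      simp (config := { decide := true }) only [eA1_val, eA2_val, eA3_val, eA12_val,
        eA13_val, eA23_val, eA123_val, Finset.mem_insert, Finset.mem_singleton,
        if_true, if_false] <;> omega
  rw [show x = ∑ v ∈ x.support, monomial v (coeff v x) from
    (support_sum_monomial_coeff x).symm]
  exact Ideal.sum_mem _ hmem

lemma part1 (r : ℕ) (_hr : 1 ≤ r) :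
    idealIntCl ((extIdeal k 3) ^ r) = ((extIdeal k 3) ^ r : Ideal _) := by
  apply Set.Subset.antisymm (part1sub k r)
  intro x hx
  exact ⟨1, one_pos, fun _ => -x, by
    intro i hi
    rw [Finset.mem_Icc] at hi
    have : i = 1 := by omega
    rw [this, pow_one]
    exact neg_mem hx, by simp⟩


end Assemble

lemma dvd_ymon (k : Type*) [Field k] (i j : Fin 3) (b : EIdx 3 → ℕ)
    (h : ∀ A : EIdx 3, (if i ∈ A.1 then 1 else 0) + (if j ∈ A.1 then 1 else 0) ≤ b A) :
    extGen k 3 i * extGen k 3 j ∣ ymon k 3 b := by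
  rw [extGen, extGen, ymon, ← Finset.prod_mul_distrib]
  apply Finset.prod_dvd_prod_of_dvd
  intro A _
  have hh : (if i ∈ A.1 then (X A : MvPolynomial (EIdx 3) k) else 1) *
      (if j ∈ A.1 then X A else 1)
      = X A ^ ((if i ∈ A.1 then 1 else 0) + (if j ∈ A.1 then 1 else 0)) := by
    split_ifs <;> ring
  rw [hh]
  exact pow_dvd_pow _ (h A)

lemma part2 (k : Type*) [Field k] (b : EIdx 3 → ℕ)
    (hyp : ∃ α : Fin 3 → ℚ, (∀ i, 0 ≤ α i) ∧ (∑ i, α i = 2) ∧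
        ∀ A : EIdx 3, (∑ i ∈ A.1, α i) ≤ (b A : ℚ)) :
    ∃ i j : Fin 3, extGen k 3 i * extGen k 3 j ∣ ymon k 3 b := by
  obtain ⟨α, hα0, hαs, hαA⟩ := hyp
  rw [Fin.sum_univ_three] at hαs
  have s1 := hαA eA1
  have s2 := hαA eA2
  have s3 := hαA eA3
  have s12 := hαA eA12
  have s13 := hαA eA13
  have s23 := hαA eA23
  have s123 := hαA eA123
  rw [show (eA1.1 : Finset (Fin 3)) = {0} from rfl] at s1
  rw [show (eA2.1 : Finset (Fin 3)) = {1} from rfl] at s2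
  rw [show (eA3.1 : Finset (Fin 3)) = {2} from rfl] at s3
  rw [show (eA12.1 : Finset (Fin 3)) = {0,1} from rfl] at s12
  rw [show (eA13.1 : Finset (Fin 3)) = {0,2} from rfl] at s13
  rw [show (eA23.1 : Finset (Fin 3)) = {1,2} from rfl] at s23
  rw [show (eA123.1 : Finset (Fin 3)) = {0,1,2} from rfl] at s123
  rw [Finset.sum_singleton] at s1 s2 s3
  rw [Finset.sum_pair (by decide)] at s12 s13 s23
  rw [show ({0,1,2} : Finset (Fin 3)) = Finset.univ from by decide, Fin.sum_univ_three] at s123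
  have h0 := hα0 0; have h1 := hα0 1; have h2 := hα0 2
  -- nine nat inequalities with r = 2
  have n1 : 2 ≤ b eA123 := by
    have : (2:ℚ) ≤ (b eA123 : ℚ) := by linarith
    exact_mod_cast this
  have n2 : 2 ≤ b eA1 + b eA23 := by
    have : (2:ℚ) ≤ (b eA1 : ℚ) + (b eA23 : ℚ) := by linarith
    exact_mod_cast this
  have n3 : 2 ≤ b eA2 + b eA13 := by
    have : (2:ℚ) ≤ (b eA2 : ℚ) + (b eA13 : ℚ) := by linarith
    exact_mod_cast this
  have n4 : 2 ≤ b eA3 + b eA12 := by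
    have : (2:ℚ) ≤ (b eA3 : ℚ) + (b eA12 : ℚ) := by linarith
    exact_mod_cast this
  have n5 : 2 ≤ b eA12 + b eA13 := by
    have : (2:ℚ) ≤ (b eA12 : ℚ) + (b eA13 : ℚ) := by linarith
    exact_mod_cast this
  have n6 : 2 ≤ b eA12 + b eA23 := by
    have : (2:ℚ) ≤ (b eA12 : ℚ) + (b eA23 : ℚ) := by linarith
    exact_mod_cast this
  have n7 : 2 ≤ b eA13 + b eA23 := by
    have : (2:ℚ) ≤ (b eA13 : ℚ) + (b eA23 : ℚ) := by linarith
    exact_mod_cast this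
  have n8 : 2 ≤ b eA1 + b eA2 + b eA3 := by
    have : (2:ℚ) ≤ (b eA1 : ℚ) + (b eA2 : ℚ) + (b eA3 : ℚ) := by linarith
    exact_mod_cast this
  have n9 : 2*2 ≤ b eA12 + b eA13 + b eA23 := by
    have : (4:ℚ) ≤ (b eA12 : ℚ) + (b eA13 : ℚ) + (b eA23 : ℚ) := by linarith
    exact_mod_cast this
  obtain ⟨c1, c2, c3, hc, k1, k2, k3, k12, k13, k23, k123⟩ :=
    keyNat 2 (b eA1) (b eA2) (b eA3) (b eA12) (b eA13) (b eA23) (b eA123)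
      n1 n2 n3 n4 n5 n6 n7 n8 n9
  have hpat : (c1=2∧c2=0∧c3=0)∨(c2=2∧c1=0∧c3=0)∨(c3=2∧c1=0∧c2=0)∨
      (c1=1∧c2=1∧c3=0)∨(c1=1∧c3=1∧c2=0)∨(c2=1∧c3=1∧c1=0) := by omega
  rcases hpat with ⟨e1,e2,e3⟩|⟨e1,e2,e3⟩|⟨e1,e2,e3⟩|⟨e1,e2,e3⟩|⟨e1,e2,e3⟩|⟨e1,e2,e3⟩
  · refine ⟨0, 0, dvd_ymon k 0 0 b ?_⟩
    intro A
    rcases eidx_cases A with rfl|rfl|rfl|rfl|rfl|rfl|rfl <;>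
      simp (config := { decide := true }) only [eA1_val, eA2_val, eA3_val, eA12_val,
        eA13_val, eA23_val, eA123_val, Finset.mem_insert, Finset.mem_singleton,
        if_true, if_false] <;> omega
  · refine ⟨1, 1, dvd_ymon k 1 1 b ?_⟩
    intro A
    rcases eidx_cases A with rfl|rfl|rfl|rfl|rfl|rfl|rfl <;>
      simp (config := { decide := true }) only [eA1_val, eA2_val, eA3_val, eA12_val,
        eA13_val, eA23_val, eA123_val, Finset.mem_insert, Finset.mem_singleton,
        if_true, if_false] <;> omega
  · refine ⟨2, 2, dvd_ymon k 2 2 b ?_⟩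
    intro A
    rcases eidx_cases A with rfl|rfl|rfl|rfl|rfl|rfl|rfl <;>
      simp (config := { decide := true }) only [eA1_val, eA2_val, eA3_val, eA12_val,
        eA13_val, eA23_val, eA123_val, Finset.mem_insert, Finset.mem_singleton,
        if_true, if_false] <;> omega
  · refine ⟨0, 1, dvd_ymon k 0 1 b ?_⟩
    intro A
    rcases eidx_cases A with rfl|rfl|rfl|rfl|rfl|rfl|rfl <;>
      simp (config := { decide := true }) only [eA1_val, eA2_val, eA3_val, eA12_val,
        eA13_val, eA23_val, eA123_val, Finset.mem_insert, Finset.mem_singleton,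
        if_true, if_false] <;> omega
  · refine ⟨0, 2, dvd_ymon k 0 2 b ?_⟩
    intro A
    rcases eidx_cases A with rfl|rfl|rfl|rfl|rfl|rfl|rfl <;>
      simp (config := { decide := true }) only [eA1_val, eA2_val, eA3_val, eA12_val,
        eA13_val, eA23_val, eA123_val, Finset.mem_insert, Finset.mem_singleton,
        if_true, if_false] <;> omega
  · refine ⟨1, 2, dvd_ymon k 1 2 b ?_⟩
    intro A
    rcases eidx_cases A with rfl|rfl|rfl|rfl|rfl|rfl|rfl <;>
      simp (config := { decide := true }) only [eA1_val, eA2_val, eA3_val, eA12_val,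
        eA13_val, eA23_val, eA123_val, Finset.mem_insert, Finset.mem_singleton,
        if_true, if_false] <;> omega

theorem stmt8 (k : Type*) [Field k] :
    -- `E_3` is normal: every power is integrally closed
    (∀ r : ℕ, 1 ≤ r →
      idealIntCl ((extIdeal k 3) ^ r) = ((extIdeal k 3) ^ r : Ideal _)) ∧
    -- more precisely: membership criterion for the closure of `E_3^2` implies
    -- divisibility by some `ε_i ε_j`
    (∀ b : EIdx 3 → ℕ,
      (∃ α : Fin 3 → ℚ, (∀ i, 0 ≤ α i) ∧ (∑ i, α i = 2) ∧
        ∀ A : EIdx 3, (∑ i ∈ A.1, α i) ≤ (b A : ℚ)) →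
      ∃ i j : Fin 3, extGen k 3 i * extGen k 3 j ∣ ymon k 3 b) := by
  exact ⟨part1 k, part2 k⟩
end

section
/- For q ≥ 4 and r ≥ 2, define g(r,q) = (∏_{|A|≥1} y_A)(∏_{|A|≥3} y_A) ε_1^{r−2} in S_[q]. Then g(r,q)^q ∈ (E_q^r)^q, i.e., g(r,q) satisfies the integral dependence equation z^q − g(r,q)^q = 0 over E_q^r; hence g(r,q) ∈ \overline{E_q^r}. -/
open MvPolynomial

/-- `g(r,q) = (∏_{|A| ≥ 1} y_A)(∏_{|A| ≥ 3} y_A) ε_1^{r-2}`. -/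
noncomputable def gMon (k : Type*) [Field k] (q r : ℕ) (h0 : 0 < q) :
    MvPolynomial (EIdx q) k :=
  (∏ A : EIdx q, X A) * (∏ A : EIdx q, if 3 ≤ A.1.card then X A else 1) *
    extGen k q ⟨0, h0⟩ ^ (r - 2)

section Aux

variable {k : Type*} [Field k] {q : ℕ}

lemma prodX_mul (e f : EIdx q → ℕ) :
    (∏ A : EIdx q, (X A : MvPolynomial (EIdx q) k) ^ e A) *
      (∏ A : EIdx q, (X A : MvPolynomial (EIdx q) k) ^ f A) =
      ∏ A : EIdx q, (X A : MvPolynomial (EIdx q) k) ^ (e A + f A) := by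
  rw [← Finset.prod_mul_distrib]
  exact Finset.prod_congr rfl fun A _ => (pow_add _ _ _).symm

lemma prodX_pow (e : EIdx q → ℕ) (n : ℕ) :
    (∏ A : EIdx q, (X A : MvPolynomial (EIdx q) k) ^ e A) ^ n =
      ∏ A : EIdx q, (X A : MvPolynomial (EIdx q) k) ^ (e A * n) := by
  rw [← Finset.prod_pow]
  exact Finset.prod_congr rfl fun A _ => (pow_mul _ _ _).symm

lemma extGen_eq (i : Fin q) :
    extGen k q i =
      ∏ A : EIdx q, (X A : MvPolynomial (EIdx q) k) ^ (if i ∈ A.1 then 1 else 0) := by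
  unfold extGen
  exact Finset.prod_congr rfl fun A _ => by split_ifs <;> simp

lemma prod_extGen :
    (∏ i : Fin q, extGen k q i) =
      ∏ A : EIdx q, (X A : MvPolynomial (EIdx q) k) ^ A.1.card := by
  simp_rw [extGen_eq]
  rw [Finset.prod_comm]
  refine Finset.prod_congr rfl fun A _ => ?_
  rw [Finset.prod_pow_eq_pow_sum]
  congr 1
  simp [Finset.sum_ite_mem]

lemma prod_mem_pow {R : Type*} [CommRing R] (I : Ideal R) {ι : Type*} (s : Finset ι)
    (f : ι → R) (h : ∀ i ∈ s, f i ∈ I) : (∏ i ∈ s, f i) ∈ I ^ s.card := by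
  classical
  induction s using Finset.cons_induction with
  | empty => simp
  | cons a s ha ih =>
    rw [Finset.prod_cons, Finset.card_cons, pow_succ']
    exact Ideal.mul_mem_mul (h a (Finset.mem_cons_self a s))
      (ih fun i hi => h i (Finset.mem_cons_of_mem hi))

lemma key (q r : ℕ) (hq : 4 ≤ q) (hr : 2 ≤ r) (h0 : 0 < q) :
    gMon k q r h0 ^ q =
      ((∏ i : Fin q, extGen k q i) ^ 2 * extGen k q ⟨0, h0⟩ ^ ((r - 2) * q)) *
        ∏ A : EIdx q, (X A : MvPolynomial (EIdx q) k) ^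
          (q + (if 3 ≤ A.1.card then q else 0) - 2 * A.1.card) := by
  unfold gMon
  have hX : (∏ A : EIdx q, (X A : MvPolynomial (EIdx q) k)) =
      ∏ A : EIdx q, (X A : MvPolynomial (EIdx q) k) ^ (1 : ℕ) := by simp
  have hB : (∏ A : EIdx q, if 3 ≤ A.1.card then (X A : MvPolynomial (EIdx q) k) else 1) =
      ∏ A : EIdx q, (X A : MvPolynomial (EIdx q) k) ^ (if 3 ≤ A.1.card then 1 else 0) :=
    Finset.prod_congr rfl fun A _ => by split_ifs <;> simp
  rw [hX, hB, extGen_eq (⟨0, h0⟩ : Fin q), prodX_pow, prodX_mul, prodX_mul, prodX_pow,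
    prod_extGen, prodX_pow, prodX_pow, prodX_mul, prodX_mul]
  refine Finset.prod_congr rfl fun A _ => ?_
  congr 1
  have h1 : 1 ≤ A.1.card := A.2.card_pos
  have h2 : A.1.card ≤ q := by simpa using Finset.card_le_univ A.1
  split_ifs with hb hd hd <;>
    simp only [one_mul, mul_one, zero_mul, mul_zero, add_zero, zero_add, add_mul] <;>
    first
      | omega
      | (generalize (r - 2) * q = u; omega)

end Aux

theorem stmt9 (k : Type*) [Field k] (q r : ℕ) (hq : 4 ≤ q) (hr : 2 ≤ r) :
    gMon k q r (by omega) ^ q ∈ ((extIdeal k q) ^ r) ^ q ∧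
    gMon k q r (by omega) ∈ idealIntCl ((extIdeal k q) ^ r) := by
  have h0 : 0 < q := by omega
  have hmem : gMon k q r h0 ^ q ∈ ((extIdeal k q) ^ r) ^ q := by
    rw [← pow_mul, key q r hq hr h0]
    have h1 : (∏ i : Fin q, extGen k q i) ∈ extIdeal k q ^ q := by
      have := prod_mem_pow (extIdeal k q) Finset.univ (extGen k q)
        (fun i _ => Ideal.subset_span (Set.mem_range_self i))
      simpa using this
    have h2 := Ideal.pow_mem_pow h1 2
    have h3 : extGen k q ⟨0, h0⟩ ^ ((r - 2) * q) ∈ extIdeal k q ^ ((r - 2) * q) :=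
      Ideal.pow_mem_pow (Ideal.subset_span (Set.mem_range_self _)) _
    have h4 := Ideal.mul_mem_mul h2 h3
    rw [← pow_mul, ← pow_add] at h4
    have hexp : r * q = q * 2 + (r - 2) * q := by
      rw [mul_comm q 2, ← add_mul]
      congr 1
      omega
    rw [hexp]
    exact Ideal.mul_mem_right _ _ h4
  refine ⟨hmem, q, h0, fun i => if i = q then -(gMon k q r h0 ^ q) else 0, ?_, ?_⟩
  · intro i hi
    by_cases h : i = q
    · subst h
      simpa using neg_mem hmem
    · simp [h]
  · simp only [ite_mul, zero_mul]
    rw [Finset.sum_ite_eq' (Finset.Icc 1 q) q]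
    simp [h0, Nat.sub_self]
    rw [if_pos (show 1 ≤ q by omega)]
    exact add_neg_cancel _
end

section
/- For q ≥ 1 and each nonempty X ⊆ [q], define f_X = (∏_{X⊆A} y_A^2)(∏_{A : X∩A ≠ ∅ and X∩([q]\A) ≠ ∅} y_A), products over nonempty A ⊆ [q]. Then: (1) f_{{i}} = ε_i^2; (2) f_{{i,j}} = ε_i ε_j for i ≠ j; (3) f_{[q]} = y^{1 + e_{[q]}} (all variables to the first power, except y_{[q]} squared); (4) deg f_X = 2^q; (5) f_X ≠ f_Y whenever X ≠ Y. -/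
open MvPolynomial

/-- `f_X = (∏_{X ⊆ A} y_A²) (∏_{X∩A ≠ ∅, X∩Aᶜ ≠ ∅} y_A)`. -/
noncomputable def fMon (k : Type*) [Field k] (q : ℕ) (Xs : Finset (Fin q)) :
    MvPolynomial (EIdx q) k :=
  (∏ A : EIdx q, if Xs ⊆ A.1 then X A ^ 2 else 1) *
    (∏ A : EIdx q,
      if (Xs ∩ A.1).Nonempty ∧ (Xs ∩ A.1ᶜ).Nonempty then X A else 1)

/-- The exponent of `y_A` in `f_X`. -/
def gfun {q : ℕ} (Xs : Finset (Fin q)) (A : EIdx q) : ℕ :=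
  if Xs ⊆ A.1 then 2
  else if (Xs ∩ A.1).Nonempty ∧ (Xs ∩ A.1ᶜ).Nonempty then 1 else 0

lemma prod_X_pow_univ {k : Type*} [Field k] {q : ℕ} (g : EIdx q → ℕ) :
    (∏ A : EIdx q, X A ^ g A) =
      monomial (Finsupp.equivFunOnFinite.symm g) (1 : k) := by
  rw [← prod_X_pow_eq_monomial]
  exact (Finset.prod_subset (Finset.subset_univ _) (fun A _ hA => by
    simp only [Finsupp.mem_support_iff, not_not] at hA
    rw [show g A = 0 from hA, pow_zero])).symm

lemma fMon_eq_monomial (k : Type*) [Field k] (q : ℕ) (Xs : Finset (Fin q)) :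
    fMon k q Xs = monomial (Finsupp.equivFunOnFinite.symm (gfun Xs)) (1 : k) := by
  rw [← prod_X_pow_univ, fMon, ← Finset.prod_mul_distrib]
  apply Finset.prod_congr rfl
  intro A _
  unfold gfun
  by_cases h1 : Xs ⊆ A.1
  · have h2 : ¬ ((Xs ∩ A.1).Nonempty ∧ (Xs ∩ A.1ᶜ).Nonempty) := by
      rintro ⟨-, x, hx⟩
      simp only [Finset.mem_inter, Finset.mem_compl] at hx
      exact hx.2 (h1 hx.1)
    simp [h1, h2]
  · by_cases h2 : (Xs ∩ A.1).Nonempty ∧ (Xs ∩ A.1ᶜ).Nonempty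
    · simp [h1, h2]
    · simp [h1, h2]

lemma gfun_sum {q : ℕ} (Xs : Finset (Fin q)) (hXs : Xs.Nonempty) :
    (∑ A : EIdx q, gfun Xs A) = 2 ^ q := by
  -- gfun Xs A = (if (Xs ∩ A.1).Nonempty then 1 else 0) + (if Xs ⊆ A.1 then 1 else 0)
  have hsplit : ∀ A : EIdx q, gfun Xs A =
      (if (Xs ∩ A.1).Nonempty then 1 else 0) + (if Xs ⊆ A.1 then 1 else 0) := by
    intro A
    unfold gfun
    by_cases h1 : Xs ⊆ A.1
    · have : (Xs ∩ A.1).Nonempty := by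
        obtain ⟨x, hx⟩ := hXs
        exact ⟨x, Finset.mem_inter.2 ⟨hx, h1 hx⟩⟩
      simp [h1, this]
    · by_cases h2 : (Xs ∩ A.1).Nonempty
      · have h3 : (Xs ∩ A.1ᶜ).Nonempty := by
          obtain ⟨x, hx, hx2⟩ := Finset.not_subset.1 h1
          exact ⟨x, Finset.mem_inter.2 ⟨hx, Finset.mem_compl.2 hx2⟩⟩
        simp [h1, h2, h3]
      · simp [h1, h2]
  simp only [hsplit, Finset.sum_add_distrib]
  classical
  have lift : ∀ (p : Finset (Fin q) → Prop) (_ : DecidablePred p), ¬ p ∅ →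
      (∑ A : EIdx q, if p A.1 then 1 else 0) =
        ((Finset.univ : Finset (Finset (Fin q))).filter p).card := by
    intro p hp h0
    rw [Finset.card_filter]
    rw [← Finset.sum_subtype (Finset.univ.filter (fun A : Finset (Fin q) => A.Nonempty))
        (by intro A; simp) (fun A => if p A then (1:ℕ) else 0)]
    apply Finset.sum_subset (Finset.filter_subset _ _)
    intro A _ hA
    simp only [Finset.mem_filter, Finset.mem_univ, true_and,
      Finset.not_nonempty_iff_eq_empty] at hA
    subst hA
    simp [h0]
  rw [lift (fun A => (Xs ∩ A).Nonempty) _ (by simp),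
    lift (fun A => Xs ⊆ A) _ (fun h => hXs.ne_empty (Finset.subset_empty.1 h))]
  have hcardu : ((Finset.univ : Finset (Finset (Fin q)))).card = 2 ^ q := by
    simp [Finset.card_univ]
  have hm : Xs.card ≤ q := by
    have := Finset.card_le_univ Xs
    simpa using this
  have hc2 : ((Finset.univ : Finset (Finset (Fin q))).filter (fun A => Xs ⊆ A)).card
      = 2 ^ (q - Xs.card) := by
    have hbij : ((Finset.univ : Finset (Finset (Fin q))).filter (fun A => Xs ⊆ A)).card
        = Xsᶜ.powerset.card := by
      apply Finset.card_bij' (fun A _ => A \ Xs) (fun B _ => B ∪ Xs)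
      · intro A hA
        simp only [Finset.mem_filter] at hA
        simp only [Finset.mem_powerset]
        intro x hx
        simp only [Finset.mem_sdiff] at hx
        simp [hx.2]
      · intro B hB
        simp only [Finset.mem_powerset] at hB
        simp only [Finset.mem_filter, Finset.mem_univ, true_and]
        exact Finset.subset_union_right
      · intro A hA
        simp only [Finset.mem_filter] at hA
        rw [Finset.sdiff_union_of_subset hA.2]
      · intro B hB
        simp only [Finset.mem_powerset] at hB
        rw [Finset.union_sdiff_cancel_right]
        rw [Finset.disjoint_right]
        intro x hx hxB
        have := hB hxB
        simp only [Finset.mem_compl] at this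
        exact this hx
    rw [hbij, Finset.card_powerset, Finset.card_compl]
    simp
  have hc1 : ((Finset.univ : Finset (Finset (Fin q))).filter
      (fun A => (Xs ∩ A).Nonempty)).card = 2 ^ q - 2 ^ (q - Xs.card) := by
    have hneg : ((Finset.univ : Finset (Finset (Fin q))).filter
        (fun A => ¬ (Xs ∩ A).Nonempty)) = Xsᶜ.powerset := by
      ext A
      simp only [Finset.mem_filter, Finset.mem_univ, true_and, Finset.mem_powerset,
        Finset.not_nonempty_iff_eq_empty]
      constructor
      · intro h x hx
        simp only [Finset.mem_compl]
        intro hx2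
        have : x ∈ Xs ∩ A := Finset.mem_inter.2 ⟨hx2, hx⟩
        rw [h] at this
        exact absurd this (Finset.notMem_empty x)
      · intro h
        rw [Finset.eq_empty_iff_forall_notMem]
        intro x hx
        obtain ⟨hx1, hx2⟩ := Finset.mem_inter.1 hx
        have := h hx2
        simp only [Finset.mem_compl] at this
        exact this hx1
    have := Finset.card_filter_add_card_filter_not
      (s := (Finset.univ : Finset (Finset (Fin q))))
      (p := fun A => (Xs ∩ A).Nonempty)
    rw [hneg, hcardu, Finset.card_powerset, Finset.card_compl] at this
    simp only [Fintype.card_fin] at this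
    omega
  have hle : 2 ^ (q - Xs.card) ≤ 2 ^ q := Nat.pow_le_pow_right (by norm_num) (by omega)
  rw [hc1, hc2]
  omega

theorem stmt17 (k : Type*) [Field k] (q : ℕ) (hq : 1 ≤ q) :
    (∀ i : Fin q, fMon k q {i} = extGen k q i ^ 2) ∧
    (∀ i j : Fin q, i ≠ j → fMon k q {i, j} = extGen k q i * extGen k q j) ∧
    (fMon k q Finset.univ = (∏ A : EIdx q, X A) *
      X (⟨Finset.univ, ⟨⟨0, by omega⟩, Finset.mem_univ _⟩⟩ : EIdx q)) ∧
    (∀ Xs : Finset (Fin q), Xs.Nonempty → (fMon k q Xs).totalDegree = 2 ^ q) ∧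
    (∀ Xs Ys : Finset (Fin q), Xs.Nonempty → Ys.Nonempty → Xs ≠ Ys →
      fMon k q Xs ≠ fMon k q Ys) := by
  refine ⟨?_, ?_, ?_, ?_, ?_⟩
  · -- f_{i} = ε_i ^ 2
    intro i
    rw [fMon, extGen, ← Finset.prod_pow]
    have h2 : (∏ A : EIdx q,
        if (({i} : Finset (Fin q)) ∩ A.1).Nonempty ∧ (({i} : Finset (Fin q)) ∩ A.1ᶜ).Nonempty
        then X A else (1 : MvPolynomial (EIdx q) k)) = 1 := by
      apply Finset.prod_eq_one
      intro A _
      rw [if_neg]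
      rintro ⟨⟨x, hx⟩, ⟨y, hy⟩⟩
      simp only [Finset.mem_inter, Finset.mem_singleton, Finset.mem_compl] at hx hy
      obtain ⟨rfl, hx2⟩ := hx
      obtain ⟨rfl, hy2⟩ := hy
      exact hy2 hx2
    rw [h2, mul_one]
    apply Finset.prod_congr rfl
    intro A _
    by_cases h : i ∈ A.1
    · simp [h, Finset.singleton_subset_iff]
    · simp [h, Finset.singleton_subset_iff]
  · -- f_{i,j} = ε_i ε_j
    intro i j hij
    rw [fMon, extGen, extGen, ← Finset.prod_mul_distrib, ← Finset.prod_mul_distrib]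
    apply Finset.prod_congr rfl
    intro A _
    by_cases hi : i ∈ A.1 <;> by_cases hj : j ∈ A.1
    · have h1 : ({i, j} : Finset (Fin q)) ⊆ A.1 := by
        intro x hx
        rcases Finset.mem_insert.1 hx with rfl | hx
        · exact hi
        · rw [Finset.mem_singleton.1 hx]; exact hj
      have h2 : ¬ ((({i, j} : Finset (Fin q)) ∩ A.1).Nonempty ∧
          (({i, j} : Finset (Fin q)) ∩ A.1ᶜ).Nonempty) := by
        rintro ⟨-, x, hx⟩
        simp only [Finset.mem_inter, Finset.mem_compl] at hx
        exact hx.2 (h1 hx.1)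
      simp [h1, h2, hi, hj, sq]
    · have h1 : ¬ ({i, j} : Finset (Fin q)) ⊆ A.1 := fun h => hj (h (by simp))
      have h2 : ((({i, j} : Finset (Fin q)) ∩ A.1).Nonempty ∧
          (({i, j} : Finset (Fin q)) ∩ A.1ᶜ).Nonempty) :=
        ⟨⟨i, by simp [hi]⟩, ⟨j, by simp [hj]⟩⟩
      simp [h1, h2, hi, hj]
    · have h1 : ¬ ({i, j} : Finset (Fin q)) ⊆ A.1 := fun h => hi (h (by simp))
      have h2 : ((({i, j} : Finset (Fin q)) ∩ A.1).Nonempty ∧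
          (({i, j} : Finset (Fin q)) ∩ A.1ᶜ).Nonempty) :=
        ⟨⟨j, by simp [hj]⟩, ⟨i, by simp [hi]⟩⟩
      simp [h1, h2, hi, hj]
    · have h1 : ¬ ({i, j} : Finset (Fin q)) ⊆ A.1 := fun h => hi (h (by simp))
      have h2 : ¬ ((({i, j} : Finset (Fin q)) ∩ A.1).Nonempty ∧
          (({i, j} : Finset (Fin q)) ∩ A.1ᶜ).Nonempty) := by
        rintro ⟨⟨x, hx⟩, -⟩
        simp only [Finset.mem_inter, Finset.mem_insert, Finset.mem_singleton] at hx
        rcases hx.1 with rfl | rfl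
        · exact hi hx.2
        · exact hj hx.2
      simp [h1, h2, hi, hj]
  · -- f_[q]
    set U : EIdx q := ⟨Finset.univ, ⟨⟨0, by omega⟩, Finset.mem_univ _⟩⟩ with hU
    rw [fMon, ← Finset.prod_mul_distrib]
    have : ((∏ A : EIdx q, X A) * X U : MvPolynomial (EIdx q) k) =
        ∏ A : EIdx q, (X A * if A = U then X A else 1) := by
      rw [Finset.prod_mul_distrib, Finset.prod_ite_eq' Finset.univ U (fun A => X A)]
      simp
    rw [this]
    apply Finset.prod_congr rfl
    intro A _
    by_cases h : A = U
    · subst h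
      have h1 : (Finset.univ : Finset (Fin q)) ⊆ (U : EIdx q).1 := by simp [hU]
      have h2 : ¬ (((Finset.univ : Finset (Fin q)) ∩ (U : EIdx q).1).Nonempty ∧
          ((Finset.univ : Finset (Fin q)) ∩ (U : EIdx q).1ᶜ).Nonempty) := by
        rintro ⟨-, x, hx⟩
        simp [hU] at hx
      rw [if_pos h1, if_neg h2, if_pos rfl, mul_one, sq]
    · have hne : A.1 ≠ Finset.univ := by
        intro hA
        apply h
        apply Subtype.ext
        simp [hU, hA]
      have h1 : ¬ (Finset.univ : Finset (Fin q)) ⊆ A.1 := by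
        intro hsub
        exact hne (Finset.eq_univ_of_forall fun x => hsub (Finset.mem_univ x))
      have h2 : (((Finset.univ : Finset (Fin q)) ∩ A.1).Nonempty ∧
          ((Finset.univ : Finset (Fin q)) ∩ A.1ᶜ).Nonempty) := by
        constructor
        · obtain ⟨x, hx⟩ := A.2
          exact ⟨x, by simp [hx]⟩
        · have hc : A.1ᶜ.Nonempty := by
            rw [Finset.nonempty_iff_ne_empty]
            intro hcc
            exact hne (by simpa using congrArg compl hcc)
          obtain ⟨x, hx⟩ := hc
          exact ⟨x, by simpa using hx⟩
      rw [if_neg h1, if_pos h2, if_neg h, one_mul, mul_one]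
  · -- total degree
    intro Xs hXs
    rw [fMon_eq_monomial, totalDegree_monomial _ (one_ne_zero (α := k))]
    rw [Finsupp.sum_fintype _ _ (fun _ => rfl)]
    simpa using gfun_sum Xs hXs
  · -- injectivity
    intro Xs Ys hXs hYs hne heq
    rw [fMon_eq_monomial, fMon_eq_monomial] at heq
    have hd := monomial_left_injective (one_ne_zero (α := k)) heq
    have hg : gfun Xs = gfun Ys := Finsupp.equivFunOnFinite.symm.injective hd
    -- find a witness
    have key : ∀ (S T : Finset (Fin q)), S.Nonempty → T.Nonempty →
        ∀ x ∈ S, x ∉ T → gfun S ≠ gfun T := by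
      intro S T hS hT x hxS hxT hgeq
      have hA : (⟨{x}, Finset.singleton_nonempty x⟩ : EIdx q) = ⟨{x}, _⟩ := rfl
      set A : EIdx q := ⟨{x}, Finset.singleton_nonempty x⟩
      have h1 : gfun S A ≠ 0 := by
        unfold gfun
        by_cases h : S ⊆ ({x} : Finset (Fin q))
        · simp [A, h]
        · have : (S ∩ ({x} : Finset (Fin q))).Nonempty := ⟨x, by simp [hxS]⟩
          have h2 : (S ∩ ({x} : Finset (Fin q))ᶜ).Nonempty := by
            obtain ⟨y, hy, hy2⟩ := Finset.not_subset.1 h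
            exact ⟨y, by simp [hy, hy2]⟩
          simp [A, h, this, h2]
      have h2 : gfun T A = 0 := by
        unfold gfun
        have ha : ¬ T ⊆ ({x} : Finset (Fin q)) := by
          intro h
          obtain ⟨y, hy⟩ := hT
          have := Finset.mem_singleton.1 (h hy)
          subst this
          exact hxT hy
        have hb : ¬ ((T ∩ ({x} : Finset (Fin q))).Nonempty ∧
            (T ∩ ({x} : Finset (Fin q))ᶜ).Nonempty) := by
          rintro ⟨⟨y, hy⟩, -⟩
          simp only [Finset.mem_inter, Finset.mem_singleton] at hy
          obtain ⟨hy1, rfl⟩ := hy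
          exact hxT hy1
        simp [A, ha, hb]
      rw [hgeq] at h1
      exact h1 h2
    by_cases hsub : Xs ⊆ Ys
    · have : ¬ Ys ⊆ Xs := fun h => hne (Finset.Subset.antisymm hsub h)
      obtain ⟨y, hyY, hyX⟩ := Finset.not_subset.1 this
      exact key Ys Xs hYs hXs y hyY hyX hg.symm
    · obtain ⟨x, hxX, hxY⟩ := Finset.not_subset.1 hsub
      exact key Xs Ys hXs hYs x hxX hxY hg
end
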